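/- arXiv:1704.04051 — 9 statements merged into one kernel-verified Lean document; each statement's English description precedes it below -/
import Mathlib

section
/- For a positive integer m and a prime p not dividing m, Φ_{mp}(x) = -Φ_m(x^p) · Ψ_m(x) · Σ_{u≥0} x^{um} as an identity of formal power series, where Ψ_m(x) = (x^m - 1)/Φ_m(x). -/
open Polynomial

/-- The `m`-th inverse cyclotomic polynomial `Ψ_m = (X^m - 1)/Φ_m`. -/
noncomputable def invCyclotomic (m : ℕ) : ℤ[X] := (X ^ m - 1) /ₘ cyclotomic m ℤ

theorem cyclotomic_eq_neg_expand_mul_invCyclotomic_mul_geom (m p : ℕ) (hm : 0 < m)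
    (hp : p.Prime) (hpm : ¬ p ∣ m) :
    ((cyclotomic (m * p) ℤ : ℤ[X]) : PowerSeries ℤ) =
      -(((Polynomial.expand ℤ p (cyclotomic m ℤ) : ℤ[X]) : PowerSeries ℤ) *
        ((invCyclotomic m : ℤ[X]) : PowerSeries ℤ) *
        PowerSeries.mk fun t => if m ∣ t then (1 : ℤ) else 0) := by
  set S : PowerSeries ℤ := PowerSeries.mk fun t => if m ∣ t then (1 : ℤ) else 0 with hS
  have h1 : cyclotomic m ℤ * invCyclotomic m = X ^ m - 1 := by
    have hd : cyclotomic m ℤ ∣ X ^ m - 1 := cyclotomic.dvd_X_pow_sub_one m ℤ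
    have hmo := cyclotomic.monic m ℤ
    have := Polynomial.modByMonic_add_div (X ^ m - 1 : ℤ[X]) (cyclotomic m ℤ)
    rwa [(Polynomial.modByMonic_eq_zero_iff_dvd hmo).mpr hd, zero_add] at this
  have hgeo : (((X : ℤ[X]) ^ m - 1 : ℤ[X]) : PowerSeries ℤ) * S = -1 := by
    have : ((PowerSeries.X : PowerSeries ℤ) ^ m - 1) * S = -1 := by
      ext n
      rw [sub_mul, one_mul, map_sub, map_neg, PowerSeries.coeff_one,
        PowerSeries.coeff_X_pow_mul']
      simp only [hS, PowerSeries.coeff_mk]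
      rcases eq_or_ne n 0 with rfl | hn
      · have : ¬ m ≤ 0 := by omega
        simp [this, Nat.dvd_zero]
      · simp only [hn, if_false]
        by_cases hle : m ≤ n
        · have : m ∣ n - m ↔ m ∣ n := by
            constructor
            · intro h; have := Nat.dvd_add h (dvd_refl m); rwa [Nat.sub_add_cancel hle] at this
            · intro h; exact (Nat.dvd_sub h (dvd_refl m))
          simp [hle, this]
        · have : ¬ m ∣ n := fun h => hle (Nat.le_of_dvd (Nat.pos_of_ne_zero hn) h)
          simp [hle, this]
    simpa using this
  have hexp := cyclotomic_expand_eq_cyclotomic_mul hp hpm ℤ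
  rw [hexp]
  push_cast [Polynomial.coe_mul]
  calc ((cyclotomic (m * p) ℤ : ℤ[X]) : PowerSeries ℤ)
      = -(((cyclotomic (m * p) ℤ : ℤ[X]) : PowerSeries ℤ) *
          ((((X : ℤ[X]) ^ m - 1 : ℤ[X]) : PowerSeries ℤ) * S)) := by
        rw [hgeo]; ring
    _ = -((cyclotomic (m * p) ℤ : ℤ[X]) * ((cyclotomic m ℤ : ℤ[X]) : PowerSeries ℤ) *
          ((invCyclotomic m : ℤ[X]) : PowerSeries ℤ) * S) := by
        rw [← h1]; push_cast [Polynomial.coe_mul]; ring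
end

section
/- Let m be an odd squarefree positive integer and p a prime not dividing m, with r = p mod m. Then for every integer s, rem(x^{m - (s mod m)} · Ψ_m(x) · Φ_m(x^r), x^m - 1) = 0; in particular Ψ_m(x) · Φ_m(x^r) ≡ 0 (mod x^m - 1). -/
open Polynomial

/-- For every integer `s`, `rem(x^{m - (s mod m)} · Ψ_m(x) · Φ_m(x^r), x^m - 1) = 0`
where `r = p mod m`. -/
theorem rotate_invCyclotomic_mul_expand_cyclotomic_eq_zero (m p : ℕ) (hm : 0 < m)
    (hodd : Odd m) (hsf : Squarefree m) (hp : p.Prime) (hpm : ¬ p ∣ m) :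
    ∀ s : ℤ,
      (X ^ (m - (s % (m : ℤ)).toNat) * (invCyclotomic m *
          Polynomial.expand ℤ (p % m) (cyclotomic m ℤ))) %ₘ (X ^ m - 1) = 0 := by
  have hmon : (X ^ m - 1 : ℤ[X]).Monic := by
    simpa using monic_X_pow_sub_C (1 : ℤ) hm.ne'
  have hΦdvd : cyclotomic m ℤ ∣ X ^ m - 1 := cyclotomic.dvd_X_pow_sub_one m ℤ
  have hfac : cyclotomic m ℤ * invCyclotomic m = X ^ m - 1 := by
    have := modByMonic_add_div (X ^ m - 1 : ℤ[X]) (cyclotomic m ℤ)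
    rwa [(modByMonic_eq_zero_iff_dvd (cyclotomic.monic m ℤ)).2 hΦdvd, zero_add] at this
  -- congruence between expand p and expand (p % m)
  have hXdvd : (X : ℤ[X]) ^ m - 1 ∣ X ^ p - X ^ (p % m) := by
    have h1 : (X : ℤ[X]) ^ p - X ^ (p % m)
        = X ^ (p % m) * ((X ^ m) ^ (p / m) - 1) := by
      rw [mul_sub, mul_one, ← pow_mul, ← pow_add, Nat.mod_add_div]
    rw [h1]
    exact Dvd.dvd.mul_left (by simpa using sub_dvd_pow_sub_pow ((X : ℤ[X]) ^ m) 1 (p / m)) _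
  have hcong : (X : ℤ[X]) ^ m - 1 ∣
      Polynomial.expand ℤ p (cyclotomic m ℤ) -
        Polynomial.expand ℤ (p % m) (cyclotomic m ℤ) := by
    refine hXdvd.trans ?_
    rw [expand_eq_comp_X_pow, expand_eq_comp_X_pow]
    have h := sub_dvd_eval_sub ((X : ℤ[X]) ^ p) (X ^ (p % m)) ((cyclotomic m ℤ).map C)
    rw [eval_map, eval_map] at h
    exact h
  have hmain : (X : ℤ[X]) ^ m - 1 ∣
      invCyclotomic m * Polynomial.expand ℤ (p % m) (cyclotomic m ℤ) := by
    have heq : invCyclotomic m * Polynomial.expand ℤ (p % m) (cyclotomic m ℤ)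
        = invCyclotomic m * Polynomial.expand ℤ p (cyclotomic m ℤ)
          - invCyclotomic m * (Polynomial.expand ℤ p (cyclotomic m ℤ)
            - Polynomial.expand ℤ (p % m) (cyclotomic m ℤ)) := by ring
    rw [heq]
    refine dvd_sub ?_ (hcong.mul_left _)
    rw [cyclotomic_expand_eq_cyclotomic_mul hp hpm]
    exact ⟨cyclotomic (m * p) ℤ, by rw [← hfac]; ring⟩
  intro s
  rw [modByMonic_eq_zero_iff_dvd hmon]
  exact hmain.mul_left _
end

section
/- Let m be an odd squarefree positive integer and p a prime not dividing m. Write Φ_{mp}(x) = Σ_{i≥0} f_{m,p,i}(x) x^{ip} with deg f_{m,p,i} < p, and write f_{m,p,i}(x) = Σ_{j≥0} f_{m,p,i,j}(x) x^{jm} with deg f_{m,p,i,j} < m. Let r = p mod m and q = ⌊p/m⌋. Then for 0 ≤ i ≤ φ(m)-1 and 0 ≤ j ≤ q-1, f_{m,p,i,j}(x) = -rem( x^{m - (ir mod m)} · Ψ_m(x) · T_{i+1}Φ_m(x^r), x^m - 1 ), where T_{i+1}Φ_m denotes the truncation of Φ_m to degree < i+1 and Ψ_m(x) = (x^m-1)/Φ_m(x).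 -/
open Polynomial

/-- The block `f_{m,p,i,j}` of `Φ_{mp}`: the `j`-th base-`x^m` digit of the `i`-th
base-`x^p` digit of `Φ_{mp}`. -/
noncomputable def cycBlock (m p i j : ℕ) : ℤ[X] :=
  ∑ k ∈ Finset.range m,
    if j * m + k < p then C ((cyclotomic (m * p) ℤ).coeff (i * p + j * m + k)) * X ^ k else 0

namespace CycAux

open Finset

variable {m p : ℕ}

lemma monic_Xm (hm : 0 < m) : ((X : ℤ[X]) ^ m - 1).Monic := by
  simpa using monic_X_pow_sub_C (1 : ℤ) hm.ne'

lemma degXm (hm : 0 < m) : ((X : ℤ[X]) ^ m - 1).degree = m := by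
  simpa using degree_X_pow_sub_C hm (1 : ℤ)

lemma psi_mul (hm : 0 < m) : cyclotomic m ℤ * invCyclotomic m = X ^ m - 1 := by
  have h := modByMonic_add_div ((X : ℤ[X]) ^ m - 1) (cyclotomic m ℤ)
  rwa [(modByMonic_eq_zero_iff_dvd (cyclotomic.monic m ℤ)).mpr
    (cyclotomic.dvd_X_pow_sub_one m ℤ), zero_add] at h

lemma psi_coeff_zero (hm : 0 < m) {u : ℕ} (hu : m ≤ u) : (invCyclotomic m).coeff u = 0 := by
  apply coeff_eq_zero_of_natDegree_lt
  have hne : invCyclotomic m ≠ 0 := by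
    intro h
    have h2 := psi_mul hm
    rw [h, mul_zero] at h2
    exact (monic_Xm hm).ne_zero h2.symm
  have hXm : ((X : ℤ[X]) ^ m - 1).natDegree = m := by
    simpa using natDegree_X_pow_sub_C (n := m) (r := (1 : ℤ))
  have hdeg : (cyclotomic m ℤ).natDegree + (invCyclotomic m).natDegree = m := by
    have h := congrArg natDegree (psi_mul hm)
    rwa [natDegree_mul (cyclotomic_ne_zero m ℤ) hne, hXm] at h
  have htot : 0 < Nat.totient m := Nat.totient_pos.mpr hm
  rw [natDegree_cyclotomic] at hdeg
  omega

lemma X_pow_mod (hm : 0 < m) (u : ℕ) :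
    (X ^ u : ℤ[X]) %ₘ (X ^ m - 1) = X ^ (u % m) := by
  have hmod : (X ^ (u % m) : ℤ[X]) %ₘ (X ^ m - 1) = X ^ (u % m) :=
    (modByMonic_eq_self_iff (monic_Xm hm)).mpr (by
      rw [degXm hm, degree_X_pow]
      exact_mod_cast Nat.mod_lt u hm)
  rw [← hmod]
  apply modByMonic_eq_of_dvd_sub (monic_Xm hm)
  have h : (X ^ u : ℤ[X]) - X ^ (u % m) = X ^ (u % m) * ((X ^ m) ^ (u / m) - 1) := by
    rw [mul_sub, mul_one, ← pow_mul, ← pow_add]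
    congr 1
    rw [Nat.add_comm]
    exact (Nat.div_add_mod u m).symm ▸ rfl
  rw [h]
  exact Dvd.dvd.mul_left (by simpa using sub_dvd_pow_sub_pow ((X : ℤ[X]) ^ m) 1 (u / m)) _

lemma coeff_mod_Xm (hm : 0 < m) (g : ℤ[X]) {n : ℕ} (hn : g.natDegree < n) (k : ℕ) :
    (g %ₘ (X ^ m - 1)).coeff k
      = ∑ u ∈ range n, if u % m = k then g.coeff u else 0 := by
  have hrepr : g %ₘ (X ^ m - 1) = ∑ u ∈ range n, C (g.coeff u) * X ^ (u % m) := by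
    conv_lhs => rw [g.as_sum_range' n hn]
    rw [show (∑ u ∈ range n, (monomial u) (g.coeff u)) %ₘ (X ^ m - 1)
        = modByMonicHom ((X : ℤ[X]) ^ m - 1) (∑ u ∈ range n, (monomial u) (g.coeff u)) from rfl,
      map_sum]
    apply sum_congr rfl
    intro u _
    show (monomial u) (g.coeff u) %ₘ (X ^ m - 1) = _
    rw [← C_mul_X_pow_eq_monomial, ← smul_eq_C_mul, smul_modByMonic, X_pow_mod hm,
      smul_eq_C_mul]
  rw [hrepr, finset_sum_coeff]
  apply sum_congr rfl
  intro u _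
  rw [coeff_C_mul, coeff_X_pow]
  by_cases h : u % m = k
  · rw [if_pos h, if_pos h.symm, mul_one]
  · rw [if_neg h, if_neg (fun hh => h hh.symm), mul_zero]

lemma key_identity (hm : 0 < m) (hp : p.Prime) (hpm : ¬ p ∣ m) :
    cyclotomic (m * p) ℤ * (X ^ m - 1)
      = expand ℤ p (cyclotomic m ℤ) * invCyclotomic m := by
  rw [cyclotomic_expand_eq_cyclotomic_mul hp hpm, mul_assoc, psi_mul hm]

lemma cyc_coeff (hm : 0 < m) (hp : p.Prime) (hpm : ¬ p ∣ m) (N : ℕ) :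
    (cyclotomic (m * p) ℤ).coeff N
      = -∑ j ∈ range (N / m + 1),
          (expand ℤ p (cyclotomic m ℤ) * invCyclotomic m).coeff (N - j * m) := by
  set E := expand ℤ p (cyclotomic m ℤ) * invCyclotomic m with hE
  have hrec : ∀ s, (cyclotomic (m * p) ℤ).coeff s
      = (if m ≤ s then (cyclotomic (m * p) ℤ).coeff (s - m) else 0) - E.coeff s := by
    intro s
    have h := congrArg (fun f => f.coeff s) (key_identity hm hp hpm)
    rw [mul_sub, mul_one, coeff_sub, coeff_mul_X_pow'] at h
    rw [← hE] at h
    linarith [h]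
  induction N using Nat.strong_induction_on with
  | _ N ih =>
    rcases lt_or_ge N m with h | h
    · rw [hrec N, if_neg (by omega), Nat.div_eq_of_lt h]
      simp
    · rw [hrec N, if_pos h, ih (N - m) (by omega)]
      rw [Nat.div_eq_sub_div hm h]
      conv_rhs => rw [Finset.sum_range_succ']
      have harg : ∀ j : ℕ, N - (j + 1) * m = N - m - j * m := by
        intro j
        rw [add_mul, one_mul]
        omega
      simp only [harg, Nat.zero_mul, Nat.sub_zero]
      ring

lemma E_coeff (hm : 0 < m) (u : ℕ) :
    (expand ℤ p (cyclotomic m ℤ) * invCyclotomic m).coeff u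
      = ∑ t ∈ range (Nat.totient m + 1),
          if t * p ≤ u then
            (cyclotomic m ℤ).coeff t * (invCyclotomic m).coeff (u - t * p) else 0 := by
  conv_lhs => rw [(cyclotomic m ℤ).as_sum_range' (Nat.totient m + 1)
    (by rw [natDegree_cyclotomic]; omega)]
  rw [map_sum, Finset.sum_mul, finset_sum_coeff]
  apply sum_congr rfl
  intro t _
  rw [← C_mul_X_pow_eq_monomial, map_mul, expand_C, map_pow, expand_X, ← pow_mul]
  have h : (C ((cyclotomic m ℤ).coeff t) * X ^ (p * t)) * invCyclotomic m
      = C ((cyclotomic m ℤ).coeff t) * (invCyclotomic m * X ^ (t * p)) := by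
    rw [Nat.mul_comm p t]; ring
  rw [h, coeff_C_mul, coeff_mul_X_pow']
  by_cases hle : t * p ≤ u
  · rw [if_pos hle, if_pos hle]
  · rw [if_neg hle, if_neg hle, mul_zero]

lemma sum_over_j (hm : 0 < m) (b N : ℕ) :
    (∑ j ∈ range (N / m + 1),
        if b ≤ N - j * m then (invCyclotomic m).coeff (N - j * m - b) else 0)
      = if b ≤ N then (invCyclotomic m).coeff ((N - b) % m) else 0 := by
  split_ifs with hb
  · have hj0le : (N - b) / m ≤ N / m := Nat.div_le_div_right (Nat.sub_le N b)
    have hj0mem : (N - b) / m ∈ range (N / m + 1) := mem_range.mpr (by omega)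
    have hdm : (N - b) / m * m + (N - b) % m = N - b := by
      have h := Nat.div_add_mod (N - b) m
      rw [Nat.mul_comm] at h
      exact h
    have hmlt : (N - b) % m < m := Nat.mod_lt _ hm
    rw [Finset.sum_eq_single_of_mem _ hj0mem]
    · rw [if_pos (by omega)]
      congr 1
      omega
    · intro j hj hne
      by_cases hble : b ≤ N - j * m
      · rw [if_pos hble]
        by_cases hbig : m ≤ N - j * m - b
        · exact psi_coeff_zero hm hbig
        · exfalso
          apply hne
          have hjle : j ≤ N / m := by
            have := mem_range.mp hj; omega
          have hjm : j * m ≤ N :=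
            le_trans (Nat.mul_le_mul_right m hjle) (Nat.div_mul_le_self N m)
          have : (N - b) / m = j := by
            apply Nat.div_eq_of_lt_le
            · omega
            · rw [add_mul, one_mul]; omega
          omega
      · rw [if_neg hble]
  · apply Finset.sum_eq_zero
    intro j _
    rw [if_neg (by omega)]

lemma sum_over_u (hm : 0 < m) (b k n : ℕ) (hk : k < m) (hn : b + m ≤ n) :
    (∑ u ∈ range n,
        if u % m = k then (if b ≤ u then (invCyclotomic m).coeff (u - b) else 0) else 0)
      = (invCyclotomic m).coeff ((k + m - b % m) % m) := by
  set w := (k + m - b % m) % m with hw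
  have hbm : b % m < m := Nat.mod_lt _ hm
  have hwlt : w < m := Nat.mod_lt _ hm
  have hcases : b % m + w = k ∨ b % m + w = k + m := by
    rcases le_or_gt (b % m) k with h | h
    · left
      have h2 : k + m - b % m = (k - b % m) + m := by omega
      rw [hw, h2, Nat.add_mod_right, Nat.mod_eq_of_lt (show k - b % m < m by omega)]
      omega
    · right
      rw [hw, Nat.mod_eq_of_lt (show k + m - b % m < m by omega)]
      omega
  obtain ⟨c, hc⟩ : ∃ c, b = m * c + b % m := ⟨b / m, by rw [Nat.div_add_mod]⟩
  have hu0 : (b + w) % m = k := by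
    rcases hcases with h | h
    · rw [hc, show m * c + b % m + w = m * c + k by omega, Nat.mul_add_mod,
        Nat.mod_eq_of_lt hk]
    · rw [hc, show m * c + b % m + w = m * (c + 1) + k by rw [Nat.mul_add, Nat.mul_one]; omega,
        Nat.mul_add_mod, Nat.mod_eq_of_lt hk]
  have hmem : b + w ∈ range n := mem_range.mpr (by omega)
  rw [Finset.sum_eq_single_of_mem _ hmem]
  · rw [if_pos hu0, if_pos (Nat.le_add_right b w), Nat.add_sub_cancel_left]
  · intro u _ hne
    by_cases hum : u % m = k
    · rw [if_pos hum]
      by_cases hbu : b ≤ u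
      · rw [if_pos hbu]
        by_cases hbig : m ≤ u - b
        · exact psi_coeff_zero hm hbig
        · exfalso
          apply hne
          have hmeq : u % m = (b + w) % m := hum.trans hu0.symm
          have hdvd : (m : ℤ) ∣ (b + w : ℕ) - (u : ℕ) := (Nat.modEq_iff_dvd).mp hmeq
          have habs : |((b + w : ℕ) : ℤ) - (u : ℕ)| < (m : ℤ) := by
            rw [abs_lt]
            constructor <;> push_cast <;> omega
          have := Int.eq_zero_of_abs_lt_dvd hdvd habs
          omega
      · rw [if_neg hbu]
    · rw [if_neg hum]

lemma mod_arg_eq (hm : 0 < m) (i j k t : ℕ) (ht : t ≤ i) :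
    (i * p + j * m + k - t * p) % m
      = (k + m - (m - i * (p % m) % m + t * (p % m)) % m) % m := by
  have htp : t * p ≤ i * p := Nat.mul_le_mul_right p ht
  apply (ZMod.natCast_eq_natCast_iff' _ _ m).mp
  have h1 : i * p + j * m + k - t * p = (i * p - t * p) + j * m + k := by omega
  rw [h1]
  have hir : i * (p % m) % m ≤ m := le_of_lt (Nat.mod_lt _ hm)
  have hd : (m - i * (p % m) % m + t * (p % m)) % m ≤ k + m :=
    le_trans (le_of_lt (Nat.mod_lt _ hm)) (by omega)
  push_cast [Nat.cast_sub htp, Nat.cast_sub hd, Nat.cast_sub hir, ZMod.natCast_mod,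
    ZMod.natCast_self]
  ring

lemma modByMonic_X_pow_eq (f : ℤ[X]) (n : ℕ) :
    f %ₘ X ^ n = ∑ t ∈ range n, C (f.coeff t) * X ^ t := by
  have hmono : ((X : ℤ[X]) ^ n).Monic := monic_X_pow n
  have hself : (∑ t ∈ range n, C (f.coeff t) * X ^ t) %ₘ X ^ n
      = ∑ t ∈ range n, C (f.coeff t) * X ^ t := by
    rcases Nat.eq_zero_or_pos n with h0 | h0
    · subst h0; simp
    apply (modByMonic_eq_self_iff hmono).mpr
    rw [degree_X_pow]
    apply lt_of_le_of_lt (degree_sum_le _ _)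
    apply (Finset.sup_lt_iff (by exact_mod_cast WithBot.bot_lt_coe n)).mpr
    intro t ht
    apply lt_of_le_of_lt (degree_C_mul_X_pow_le _ _)
    exact_mod_cast mem_range.mp ht
  rw [← hself]
  apply modByMonic_eq_of_dvd_sub hmono
  rw [X_pow_dvd_iff]
  intro e he
  rw [coeff_sub, finset_sum_coeff]
  have h : ∀ t ∈ range n, (C (f.coeff t) * X ^ t).coeff e = if t = e then f.coeff t else 0 := by
    intro t _
    rw [coeff_C_mul, coeff_X_pow]
    by_cases h : t = e
    · rw [if_pos h.symm, mul_one, if_pos h]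
    · rw [if_neg (fun hh => h hh.symm), mul_zero, if_neg h]
  rw [Finset.sum_congr rfl h, Finset.sum_ite_eq' (range n) e (fun t => f.coeff t),
    if_pos (mem_range.mpr he), sub_self]

end CycAux

/-- Explicit formula: for `0 ≤ i ≤ φ(m)-1` and `0 ≤ j ≤ q-1`,
`f_{m,p,i,j} = -rem(x^{m-(ir mod m)} Ψ_m T_{i+1}Φ_m(x^r), x^m - 1)`. -/
theorem cycBlock_eq_explicit (m p : ℕ) (hm : 0 < m) (hodd : Odd m) (hsf : Squarefree m)
    (hp : p.Prime) (hpm : ¬ p ∣ m) :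
    ∀ i < Nat.totient m, ∀ j < p / m,
      cycBlock m p i j =
        -((X ^ (m - (i * (p % m)) % m) *
            (invCyclotomic m *
              Polynomial.expand ℤ (p % m) ((cyclotomic m ℤ) %ₘ X ^ (i + 1)))) %ₘ
          (X ^ m - 1)) := by
  intro i hi j hj
  open Finset in
  set r := p % m with hr'
  have hrlt : r < m := hr' ▸ Nat.mod_lt p hm
  have hj1 : (j + 1) * m ≤ p :=
    le_trans (Nat.mul_le_mul_right m (by omega : j + 1 ≤ p / m)) (Nat.div_mul_le_self p m)
  have hjm : ∀ k, k < m → j * m + k < p := by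
    intro k hk
    have h := hj1
    rw [add_mul, one_mul] at h
    omega
  set Ψ := invCyclotomic m with hΨ
  set d := m - (i * r) % m with hd
  set T := cyclotomic m ℤ %ₘ X ^ (i + 1) with hT
  set g := (X : ℤ[X]) ^ d * (Ψ * (expand ℤ r) T) with hg
  have hTrep : T = ∑ t ∈ range (i + 1), C ((cyclotomic m ℤ).coeff t) * X ^ t :=
    CycAux.modByMonic_X_pow_eq _ _
  have hgrep : g = ∑ t ∈ range (i + 1),
      C ((cyclotomic m ℤ).coeff t) * (Ψ * X ^ (d + t * r)) := by
    rw [hg, hTrep, map_sum, Finset.mul_sum, Finset.mul_sum]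
    apply Finset.sum_congr rfl
    intro t _
    rw [map_mul, expand_C, map_pow, expand_X, ← pow_mul]
    ring
  have hgcoeff : ∀ u, g.coeff u
      = ∑ t ∈ range (i + 1), (cyclotomic m ℤ).coeff t *
          (if d + t * r ≤ u then Ψ.coeff (u - (d + t * r)) else 0) := by
    intro u
    rw [hgrep, finset_sum_coeff]
    apply Finset.sum_congr rfl
    intro t _
    rw [coeff_C_mul, coeff_mul_X_pow']
  ext k
  rw [coeff_neg]
  rcases lt_or_ge k m with hk | hk
  · -- main case `k < m`
    have hL : (cycBlock m p i j).coeff k = (cyclotomic (m * p) ℤ).coeff (i * p + j * m + k) := by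
      rw [cycBlock, finset_sum_coeff]
      rw [Finset.sum_eq_single_of_mem k (mem_range.mpr hk)]
      · rw [if_pos (hjm k hk), coeff_C_mul, coeff_X_pow, if_pos rfl, mul_one]
      · intro k' _ hne
        split_ifs
        · rw [coeff_C_mul, coeff_X_pow, if_neg (fun hh => hne hh.symm), mul_zero]
        · exact coeff_zero k
    set N := i * p + j * m + k with hN
    have hmain : (cyclotomic (m * p) ℤ).coeff N
        = -∑ t ∈ range (i + 1),
            (cyclotomic m ℤ).coeff t * Ψ.coeff ((N - t * p) % m) := by
      calc (cyclotomic (m * p) ℤ).coeff N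
          = -∑ j' ∈ range (N / m + 1),
              (expand ℤ p (cyclotomic m ℤ) * invCyclotomic m).coeff (N - j' * m) :=
            CycAux.cyc_coeff hm hp hpm N
        _ = -∑ j' ∈ range (N / m + 1), ∑ t ∈ range (Nat.totient m + 1),
              (if t * p ≤ N - j' * m then
                (cyclotomic m ℤ).coeff t * Ψ.coeff (N - j' * m - t * p) else 0) := by
            congr 1
            exact Finset.sum_congr rfl fun j' _ => CycAux.E_coeff hm _
        _ = -∑ t ∈ range (Nat.totient m + 1), (cyclotomic m ℤ).coeff t *
              ∑ j' ∈ range (N / m + 1),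
                (if t * p ≤ N - j' * m then Ψ.coeff (N - j' * m - t * p) else 0) := by
            rw [Finset.sum_comm]
            congr 1
            apply Finset.sum_congr rfl
            intro t _
            rw [Finset.mul_sum]
            apply Finset.sum_congr rfl
            intro j' _
            rw [mul_ite, mul_zero]
        _ = -∑ t ∈ range (Nat.totient m + 1), (cyclotomic m ℤ).coeff t *
              (if t * p ≤ N then Ψ.coeff ((N - t * p) % m) else 0) := by
            congr 1
            exact Finset.sum_congr rfl fun t _ => by rw [CycAux.sum_over_j hm]
        _ = -∑ t ∈ range (i + 1),
              (cyclotomic m ℤ).coeff t * Ψ.coeff ((N - t * p) % m) := by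
            congr 1
            rw [← Finset.sum_subset
              (Finset.range_subset_range.mpr (by omega : i + 1 ≤ Nat.totient m + 1))]
            · apply Finset.sum_congr rfl
              intro t ht
              have hti : t ≤ i := by have := mem_range.mp ht; omega
              have h1 : t * p ≤ i * p := Nat.mul_le_mul_right p hti
              rw [if_pos (by omega : t * p ≤ N)]
            · intro t ht hnt
              have hti : i + 1 ≤ t := by
                by_contra hc
                exact hnt (mem_range.mpr (by omega))
              have h1 : (i + 1) * p ≤ t * p := Nat.mul_le_mul_right p hti
              rw [add_mul, one_mul] at h1
              have h2 := hjm k hk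
              rw [if_neg (by omega : ¬ t * p ≤ N), mul_zero]
    have hnbig : g.natDegree < g.natDegree + (d + i * r + m) + 1 := by omega
    have hRcoeff : (g %ₘ (X ^ m - 1)).coeff k
        = ∑ t ∈ range (i + 1),
            (cyclotomic m ℤ).coeff t * Ψ.coeff ((k + m - (d + t * r) % m) % m) := by
      rw [CycAux.coeff_mod_Xm hm g hnbig k]
      calc ∑ u ∈ range (g.natDegree + (d + i * r + m) + 1),
              (if u % m = k then g.coeff u else 0)
          = ∑ u ∈ range (g.natDegree + (d + i * r + m) + 1), ∑ t ∈ range (i + 1),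
              (if u % m = k then (cyclotomic m ℤ).coeff t *
                (if d + t * r ≤ u then Ψ.coeff (u - (d + t * r)) else 0) else 0) := by
            apply Finset.sum_congr rfl
            intro u _
            by_cases h : u % m = k
            · rw [if_pos h, hgcoeff u]
              exact Finset.sum_congr rfl fun t _ => by rw [if_pos h]
            · rw [if_neg h]
              exact (Finset.sum_eq_zero fun t _ => by rw [if_neg h]).symm
        _ = ∑ t ∈ range (i + 1), (cyclotomic m ℤ).coeff t *
              ∑ u ∈ range (g.natDegree + (d + i * r + m) + 1),
                (if u % m = k then
                  (if d + t * r ≤ u then Ψ.coeff (u - (d + t * r)) else 0) else 0) := by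
            rw [Finset.sum_comm]
            apply Finset.sum_congr rfl
            intro t _
            rw [Finset.mul_sum]
            apply Finset.sum_congr rfl
            intro u _
            simp only [mul_ite, mul_zero]
        _ = ∑ t ∈ range (i + 1),
              (cyclotomic m ℤ).coeff t * Ψ.coeff ((k + m - (d + t * r) % m) % m) := by
            apply Finset.sum_congr rfl
            intro t ht
            congr 1
            apply CycAux.sum_over_u hm _ _ _ hk
            have h1 : t * r ≤ i * r :=
              Nat.mul_le_mul_right r (by have := mem_range.mp ht; omega)
            omega
    rw [hL, hmain, hRcoeff]
    congr 1
    apply Finset.sum_congr rfl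
    intro t ht
    congr 1
    have harg := CycAux.mod_arg_eq (p := p) hm i j k t (by have := mem_range.mp ht; omega)
    rw [← hr', ← hd] at harg
    rw [hN]
    exact congrArg _ harg
  · -- case `m ≤ k`: both sides vanish
    have hR : (g %ₘ (X ^ m - 1)).coeff k = 0 := by
      apply coeff_eq_zero_of_degree_lt
      apply lt_of_lt_of_le (degree_modByMonic_lt g (CycAux.monic_Xm hm))
      rw [CycAux.degXm hm]
      exact_mod_cast hk
    rw [hR, neg_zero, cycBlock, finset_sum_coeff]
    apply Finset.sum_eq_zero
    intro k' hk'
    have hk'm := mem_range.mp hk'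
    split_ifs
    · rw [coeff_C_mul, coeff_X_pow, if_neg (by omega), mul_zero]
    · exact coeff_zero k
end

section
/- Let m be an odd squarefree positive integer and p a prime not dividing m, with q = ⌊p/m⌋ and r = p mod m. With blocks f_{m,p,i,j} defined by the base-x^p then base-x^m digit decomposition of Φ_{mp}, we have f_{m,p,i,q} = rem(f_{m,p,i,0}, x^r) for all 0 ≤ i ≤ φ(m)-1 (the last block is the truncation of the first block to degree < r). -/
open Polynomial

/-- Coefficient of remainder modulo `X^r`. -/
lemma coeff_modByMonic_X_pow {R : Type*} [CommRing R] (g : R[X]) (r k : ℕ) :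
    (g %ₘ X ^ r).coeff k = if k < r then g.coeff k else 0 := by
  nontriviality R
  have hmon : (X ^ r : R[X]).Monic := monic_X_pow r
  split_ifs with h
  · conv_rhs => rw [← modByMonic_add_div g (X ^ r)]
    rw [coeff_add, (commute_X_pow _ r).eq, coeff_mul_X_pow', if_neg (by omega), add_zero]
  · refine coeff_eq_zero_of_degree_lt ?_
    calc (g %ₘ X ^ r).degree < (X ^ r : R[X]).degree := degree_modByMonic_lt g hmon
    _ ≤ k := by rw [degree_X_pow]; exact_mod_cast Nat.le_of_not_lt h

/-- The key coefficient identity. -/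
lemma cyc_coeff_step (m p : ℕ) (hm : 2 ≤ m) (hp : p.Prime) (hpm : ¬ p ∣ m)
    {i j k : ℕ} (hi : i < m.totient) (hj : 1 ≤ j) (hjk : j * m + k < p) :
    (cyclotomic (m * p) ℤ).coeff (i * p + j * m + k)
      = (cyclotomic (m * p) ℤ).coeff (i * p + (j - 1) * m + k) := by
  set F := cyclotomic (m * p) ℤ with hF
  set Ψ : ℤ[X] := ∏ d ∈ m.properDivisors, cyclotomic d ℤ with hΨ
  have hΨmon : Ψ.Monic := monic_prod_of_monic _ _ fun d _ => cyclotomic.monic d ℤ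
  have hm0 : 0 < m := by omega
  have hsplit : (X : ℤ[X]) ^ m - 1 = cyclotomic m ℤ * Ψ := by
    rw [← prod_cyclotomic_eq_X_pow_sub_one hm0, ← Nat.insert_self_properDivisors hm0.ne',
      Finset.prod_insert (Nat.self_notMem_properDivisors)]
  have hkey : ((X : ℤ[X]) ^ m - 1) * F = Ψ * expand ℤ p (cyclotomic m ℤ) := by
    rw [cyclotomic_expand_eq_cyclotomic_mul hp hpm, hsplit, ← hF]
    ring
  have hΨdeg : Ψ.natDegree < m := by
    have h1 : (cyclotomic m ℤ * Ψ).natDegree = m := by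
      rw [← hsplit]
      have : ((X:ℤ[X]) ^ m - C 1).natDegree = m := natDegree_X_pow_sub_C
      simpa using this
    rw [natDegree_mul (cyclotomic_ne_zero m ℤ) hΨmon.ne_zero] at h1
    have ht : 0 < m.totient := Nat.totient_pos.2 hm0
    rw [natDegree_cyclotomic] at h1
    omega
  -- coefficient of RHS at n is 0
  have n_eq : i * p + j * m + k = (i * p + (j - 1) * m + k) + m := by
    have : j = (j - 1) + 1 := by omega
    nlinarith [this]
  set n := i * p + j * m + k with hn
  have hrhs : (Ψ * expand ℤ p (cyclotomic m ℤ)).coeff n = 0 := by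
    rw [coeff_mul]
    refine Finset.sum_eq_zero fun ab hab => ?_
    rw [Finset.HasAntidiagonal.mem_antidiagonal] at hab
    by_cases hdvd : p ∣ ab.2
    · obtain ⟨l, hl⟩ := hdvd
      have hip : i * p + j * m + k < (i + 1) * p := by nlinarith
      have : l ≤ i := by
        by_contra hcon
        have : (i + 1) * p ≤ p * l := by
          have : i + 1 ≤ l := by omega
          calc (i+1) * p ≤ l * p := Nat.mul_le_mul_right p this
          _ = p * l := by ring
        omega
      have ha : m ≤ ab.1 := by nlinarith
      have h0 : Ψ.coeff ab.1 = 0 := coeff_eq_zero_of_natDegree_lt (by omega)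
      rw [h0, zero_mul]
    · have h0 : (expand ℤ p (cyclotomic m ℤ)).coeff ab.2 = 0 := by
        rw [coeff_expand hp.pos, if_neg hdvd]
      rw [h0, mul_zero]
  rw [← hkey] at hrhs
  rw [sub_mul, one_mul, coeff_sub, (commute_X_pow _ m).eq, coeff_mul_X_pow', if_pos,
    sub_eq_zero] at hrhs
  · have heq : i * p + j * m + k - m = i * p + (j - 1) * m + k := by omega
    rw [heq] at hrhs
    exact hrhs.symm
  · omega


lemma coeff_cycBlock (m p i j t : ℕ) :
    (cycBlock m p i j).coeff t =
      if t < m ∧ j * m + t < p then (cyclotomic (m * p) ℤ).coeff (i * p + j * m + t) else 0 := by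
  classical
  unfold cycBlock
  rw [finset_sum_coeff]
  have hcongr : ∀ k ∈ Finset.range m,
      ((if j * m + k < p then C ((cyclotomic (m * p) ℤ).coeff (i * p + j * m + k)) * X ^ k
          else 0) : ℤ[X]).coeff t
        = if t = k then (if j * m + k < p then (cyclotomic (m * p) ℤ).coeff (i * p + j * m + k)
            else 0) else 0 := by
    intro k _
    split_ifs with h1 h2 h3 <;>
      simp_all [coeff_C_mul, coeff_X_pow]
  rw [Finset.sum_congr rfl hcongr, Finset.sum_ite_eq]
  simp only [Finset.mem_range]
  split_ifs with h1 h2 h3 h4 <;> first | rfl | omega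

lemma cyc_coeff_blocks (m p : ℕ) (hm : 2 ≤ m) (hp : p.Prime) (hpm : ¬ p ∣ m)
    {i k : ℕ} (hi : i < m.totient) :
    ∀ j, j * m + k < p →
      (cyclotomic (m * p) ℤ).coeff (i * p + j * m + k)
        = (cyclotomic (m * p) ℤ).coeff (i * p + k) := by
  intro j
  induction j with
  | zero => intro _; norm_num
  | succ j ih =>
    intro hjk
    have h1 := cyc_coeff_step m p hm hp hpm hi (j := j + 1) (k := k) (by omega) hjk
    simp only [Nat.add_sub_cancel] at h1
    rw [h1, ih (by nlinarith)]


/-- Truncation: the last block `f_{m,p,i,q}` is the truncation of the first block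
`f_{m,p,i,0}` to degree `< r`. -/
theorem cycBlock_last_eq_trunc (m p : ℕ) (hm : 0 < m) (hodd : Odd m) (hsf : Squarefree m)
    (hp : p.Prime) (hpm : ¬ p ∣ m) :
    ∀ i < Nat.totient m,
      cycBlock m p i (p / m) = (cycBlock m p i 0) %ₘ X ^ (p % m) := by

  intro i hi
  by_cases hm1 : m = 1
  · subst hm1
    simp [cycBlock, Nat.div_one, Nat.mod_one, modByMonic_one]
  · have hm2 : 2 ≤ m := by omega
    ext t
    rw [coeff_cycBlock, coeff_modByMonic_X_pow, coeff_cycBlock]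
    have hqm : p / m * m + p % m = p := Nat.div_add_mod' p m
    by_cases ht : t < p % m
    · have h1 : t < m := lt_of_lt_of_le ht (Nat.mod_lt p hm).le
      rw [if_pos ⟨h1, by omega⟩, if_pos ht, if_pos ⟨h1, by omega⟩,
        show i * p + 0 * m + t = i * p + t from by omega]
      exact cyc_coeff_blocks m p hm2 hp hpm hi (p / m) (by omega)
    · rw [if_neg (by omega), if_neg ht]
end

section
/- Let m be an odd squarefree positive integer and p a prime not dividing m, with q = ⌊p/m⌋. With blocks f_{m,p,i,j} defined by the base-x^p then base-x^m digit decomposition of Φ_{mp}, for each 0 ≤ i ≤ φ(m)-1 the first q blocks are all equal: f_{m,p,i,0} = f_{m,p,i,1} = ⋯ = f_{m,p,i,q-1}. -/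
open Polynomial

lemma coeff_step (m p : ℕ) (hm : 0 < m) (hp : p.Prime) (hpm : ¬ p ∣ m)
    (i j k : ℕ) (hi : i < m.totient)
    (hj : 1 ≤ j) (hjk : j * m + k < p) :
    (cyclotomic (m * p) ℤ).coeff (i * p + j * m + k)
      = (cyclotomic (m * p) ℤ).coeff (i * p + j * m + k - m) := by
  obtain ⟨g, hg⟩ := cyclotomic.dvd_X_pow_sub_one m ℤ
  have hXm : (X ^ m - 1 : ℤ[X]) ≠ 0 := by
    intro h
    have := congrArg (fun f => f.coeff 0) h
    simp [coeff_X_pow, hm.ne'] at this; omega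
  have hgne : g ≠ 0 := by rintro rfl; simp [hg] at hXm
  have hdeg : g.natDegree < m := by
    have h1 : (X ^ m - 1 : ℤ[X]).natDegree = m := by
      simpa using (natDegree_X_pow_sub_C (n := m) (r := (1 : ℤ)))
    rw [hg, natDegree_mul (cyclotomic_ne_zero m ℤ) hgne, natDegree_cyclotomic] at h1
    have := Nat.totient_pos.mpr hm
    omega
  have key : cyclotomic (m * p) ℤ * (X ^ m - 1) = (expand ℤ p) (cyclotomic m ℤ) * g := by
    rw [hg, cyclotomic_expand_eq_cyclotomic_mul hp hpm]; ring
  set n := i * p + j * m + k with hn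
  have hmn : m ≤ n := by
    have : m ≤ j * m := Nat.le_mul_of_pos_left m hj
    omega
  have h0 : ((expand ℤ p) (cyclotomic m ℤ) * g).coeff n = 0 := by
    rw [coeff_mul]
    apply Finset.sum_eq_zero
    rintro ⟨a, b⟩ hab
    rw [Finset.HasAntidiagonal.mem_antidiagonal] at hab
    by_cases hpa : p ∣ a
    · obtain ⟨s, rfl⟩ := hpa
      have hsi : s ≤ i := by
        by_contra hsi
        push_neg at hsi
        have h1 : p * (i + 1) ≤ p * s := Nat.mul_le_mul_left p hsi
        have h2 : i * p + (j * m + k) < p * (i + 1) := by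
          rw [Nat.mul_add, Nat.mul_comm p i]; omega
        omega
      have hbm : m ≤ b := by
        have h1 : p * s ≤ p * i := Nat.mul_le_mul_left p hsi
        have h2 : m ≤ j * m := Nat.le_mul_of_pos_left m hj
        rw [Nat.mul_comm p i] at h1
        omega
      have : g.coeff b = 0 := coeff_eq_zero_of_natDegree_lt (lt_of_lt_of_le hdeg hbm)
      simp [this]
    · rw [coeff_expand hp.pos, if_neg hpa, zero_mul]
  have hcoeff := congrArg (fun f => f.coeff n) key
  simp only [h0, mul_sub, mul_one] at hcoeff
  rw [coeff_sub, coeff_mul_X_pow', if_pos hmn] at hcoeff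
  omega

lemma coeff_rep (m p : ℕ) (hm : 0 < m) (hp : p.Prime) (hpm : ¬ p ∣ m)
    (i : ℕ) (hi : i < m.totient) :
    ∀ j, j < p / m → ∀ k, k < m →
      (cyclotomic (m * p) ℤ).coeff (i * p + j * m + k)
        = (cyclotomic (m * p) ℤ).coeff (i * p + k) := by
  intro j
  induction j with
  | zero => intro _ k _; norm_num
  | succ j ih =>
    intro hj k hk
    have hq : (j + 2) * m ≤ p := by
      calc (j + 2) * m ≤ (p / m) * m := Nat.mul_le_mul_right m (by omega)
        _ ≤ p := Nat.div_mul_le_self p m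
    have hjk : (j + 1) * m + k < p := by
      have : (j + 1) * m + m = (j + 2) * m := by ring
      omega
    have hstep := coeff_step m p hm hp hpm i (j + 1) k hi (by omega) hjk
    have harith : i * p + (j + 1) * m + k - m = i * p + j * m + k := by
      have : (j + 1) * m = j * m + m := by ring
      omega
    rw [hstep, harith, ih (by omega) k hk]


/-- Repetition: for each `0 ≤ i ≤ φ(m)-1`, the first `q` blocks are all equal,
`f_{m,p,i,0} = ⋯ = f_{m,p,i,q-1}`. -/
theorem cycBlock_repetition (m p : ℕ) (hm : 0 < m) (hodd : Odd m) (hsf : Squarefree m)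
    (hp : p.Prime) (hpm : ¬ p ∣ m) :
    ∀ i < Nat.totient m, ∀ j < p / m, cycBlock m p i j = cycBlock m p i 0 := by
  intro i hi j hj
  have hqm : (p / m) * m ≤ p := Nat.div_mul_le_self p m
  unfold cycBlock
  refine Finset.sum_congr rfl fun k hk => ?_
  rw [Finset.mem_range] at hk
  have h1 : j * m + k < p := by
    have : (j + 1) * m ≤ (p / m) * m := Nat.mul_le_mul_right m (by omega)
    have : (j + 1) * m = j * m + m := by ring
    omega
  have h2 : 0 * m + k < p := by
    have : 1 * m ≤ (p / m) * m := Nat.mul_le_mul_right m (by omega)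
    omega
  rw [if_pos h1, if_pos h2]
  rw [coeff_rep m p hm hp hpm i hi j hj k hk]
  norm_num
end

section
/- Let m be an odd squarefree positive integer and p a prime not dividing m, r = p mod m. Define, for 0 ≤ i ≤ φ(m)-1, the polynomial h_i(x) := -rem(x^{m - (ir mod m)} · Ψ_m(x) · T_{i+1}Φ_m(x^r), x^m - 1), where T_{i+1} truncates to degree < i+1. Then for i + i' = φ(m) - 1, h_{i'} equals the rotation R_{φ(m)-1-r} applied to the flip F h_i, where F f(x) := x^{m-1} f(1/x) for deg f < m and R_s f := rem(x^{m - (s mod m)} f, x^m - 1). -/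
open Polynomial

/-- Rotation operator `R_s f = rem(x^{m - rem(s,m)} f, x^m - 1)` (with integer `s`). -/
noncomputable def rot (m : ℕ) (s : ℤ) (f : ℤ[X]) : ℤ[X] :=
  (X ^ (m - (s % (m : ℤ)).toNat) * f) %ₘ (X ^ m - 1)

/-- Flip operator `F f = x^{m-1} f(1/x)`, i.e. coefficient reversal in length `m`. -/
noncomputable def polyFlip (m : ℕ) (f : ℤ[X]) : ℤ[X] := f.reflect (m - 1)

/-- `h_i = -rem(x^{m-(ir mod m)} Ψ_m · T_{i+1}Φ_m(x^r), x^m - 1)`, the first block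
`f_{m,p,i,0}` of `Φ_{mp}`. -/
noncomputable def hBlock (m p i : ℕ) : ℤ[X] :=
  -((X ^ (m - (i * (p % m)) % m) *
      (invCyclotomic m * Polynomial.expand ℤ (p % m) ((cyclotomic m ℤ) %ₘ X ^ (i + 1)))) %ₘ
    (X ^ m - 1))

lemma aux_reflect_sum (N n : ℕ) {A : Type*} [CommRing A] (g : ℕ → A[X]) :
    (∑ i ∈ Finset.range n, g i).reflect N = ∑ i ∈ Finset.range n, (g i).reflect N := by
  induction n with
  | zero => simp [reflect_zero]
  | succ n ih => rw [Finset.sum_range_succ, Finset.sum_range_succ, reflect_add, ih]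

lemma aux_reflect_aeval {A S : Type*} [CommRing A] [CommRing S] [Algebra A S]
    (w : Sˣ) (N : ℕ) (f : A[X]) (hf : f.natDegree ≤ N) :
    aeval (w : S) (f.reflect N) = (w : S) ^ N * aeval ((w⁻¹ : Sˣ) : S) f := by
  rw [f.as_sum_range' (N + 1) (Nat.lt_succ_of_le hf)]
  rw [aux_reflect_sum, map_sum, map_sum, Finset.mul_sum]
  refine Finset.sum_congr rfl fun k hk => ?_
  rw [Finset.mem_range] at hk
  have hkN : k ≤ N := by omega
  rw [← C_mul_X_pow_eq_monomial, reflect_C_mul_X_pow, revAt_le hkN]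
  simp only [map_mul, aeval_C, aeval_X_pow]
  have h2 : ((w : S)) ^ k * ((w⁻¹ : Sˣ) : S) ^ k = 1 := by
    rw [← mul_pow, ← Units.val_mul, mul_inv_cancel, Units.val_one, one_pow]
  have h3 : ((w : S)) ^ (N - k) = (w : S) ^ N * ((w⁻¹ : Sˣ) : S) ^ k := by
    calc (w : S) ^ (N - k) = (w : S) ^ (N - k) * ((w : S) ^ k * ((w⁻¹ : Sˣ) : S) ^ k) := by
          rw [h2, mul_one]
    _ = ((w : S) ^ (N - k) * (w : S) ^ k) * ((w⁻¹ : Sˣ) : S) ^ k := by ring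
    _ = _ := by rw [← pow_add, show N - k + k = N from by omega]
  rw [h3]; ring

lemma aux_zpow_congr {G : Type*} [Group G] (u : G) (m : ℕ) (hu : u ^ (m : ℤ) = 1)
    {a b : ℤ} (h : a % (m : ℤ) = b % (m : ℤ)) : u ^ a = u ^ b := by
  obtain ⟨k, hk⟩ := Int.ModEq.dvd (show a ≡ b [ZMOD (m : ℤ)] from h)
  have hb : b = a + m * k := by omega
  rw [hb, zpow_add, zpow_mul, hu, one_zpow, mul_one]

lemma aux_coeff_modByMonic_X_pow (f : ℤ[X]) (n k : ℕ) :
    (f %ₘ X ^ n).coeff k = if k < n then f.coeff k else 0 := by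
  set t : ℤ[X] := ∑ j ∈ Finset.range n, C (f.coeff j) * X ^ j with ht
  have hcoefft : ∀ d, t.coeff d = if d < n then f.coeff d else 0 := by
    intro d
    rw [ht, finset_sum_coeff]
    simp only [coeff_C_mul, coeff_X_pow, mul_ite, mul_one, mul_zero]
    rw [Finset.sum_ite_eq (Finset.range n) d (fun j => f.coeff j)]
    simp [Finset.mem_range]
  have hmodt : f %ₘ X ^ n = t := by
    have hdvd : (X : ℤ[X]) ^ n ∣ f - t := by
      rw [X_pow_dvd_iff]
      intro d hd
      rw [coeff_sub, hcoefft d, if_pos hd, sub_self]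
    have h1 : (f - t) %ₘ X ^ n = 0 := (modByMonic_eq_zero_iff_dvd (monic_X_pow n)).2 hdvd
    have h2 : t %ₘ X ^ n = t := by
      rw [modByMonic_eq_self_iff (monic_X_pow n), degree_X_pow]
      refine lt_of_le_of_lt (degree_sum_le _ _) ?_
      rw [Finset.sup_lt_iff (by exact_mod_cast WithBot.bot_lt_coe n)]
      intro j hj
      refine lt_of_le_of_lt (degree_C_mul_X_pow_le _ _) ?_
      exact_mod_cast WithBot.coe_lt_coe.2 (Finset.mem_range.1 hj)
    calc f %ₘ X ^ n = ((f - t) + t) %ₘ X ^ n := by ring_nf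
    _ = (f - t) %ₘ X ^ n + t %ₘ X ^ n := add_modByMonic _ _
    _ = t := by rw [h1, h2, zero_add]
  rw [hmodt, hcoefft]

lemma aux_cyclotomic_reflect (m : ℕ) (hm : 1 < m) :
    (cyclotomic m ℤ).reflect (Nat.totient m) = cyclotomic m ℤ := by
  have hminj : Function.Injective (map (Int.castRingHom ℚ)) :=
    map_injective _ Int.cast_injective
  apply hminj
  rw [← reflect_map, map_cyclotomic]
  set φt := Nat.totient m with hφt
  set Q : ℚ[X] := cyclotomic m ℚ with hQ
  have hdQ : Q.natDegree = φt := natDegree_cyclotomic m ℚ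
  have hc0 : Q.coeff 0 = 1 := cyclotomic_coeff_zero ℚ hm
  set Rf : ℚ[X] := Q.reflect φt with hRf
  have hRfc : Rf.coeff φt = 1 := by
    rw [hRf, coeff_reflect, revAt_le le_rfl, Nat.sub_self, hc0]
  have hRfd : Rf.natDegree = φt := by
    have hle : Rf.natDegree ≤ φt := by
      apply natDegree_le_iff_coeff_eq_zero.2
      intro N hN
      rw [hRf, coeff_reflect, revAt_eq_self_of_lt hN]
      exact coeff_eq_zero_of_natDegree_lt (by omega)
    have hge : φt ≤ Rf.natDegree := le_natDegree_of_ne_zero (by rw [hRfc]; exact one_ne_zero)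
    omega
  have hRfm : Rf.Monic := by
    rw [Monic, leadingCoeff, hRfd, hRfc]
  set ζ : ℂ := Complex.exp (2 * Real.pi * Complex.I / m) with hζdef
  have hζ : IsPrimitiveRoot ζ m := Complex.isPrimitiveRoot_exp m (by omega)
  have hζne : ζ ≠ 0 := hζ.ne_zero (by omega)
  set w : ℂˣ := Units.mk0 ζ hζne with hw
  have haeval : aeval ζ Rf = 0 := by
    have h1 := aux_reflect_aeval (A := ℚ) w φt Q (le_of_eq hdQ)
    have hwv : ((w : ℂˣ) : ℂ) = ζ := rfl
    have hwi : ((w⁻¹ : ℂˣ) : ℂ) = ζ⁻¹ := by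
      rw [Units.val_inv_eq_inv_val, hwv]
    have hroot : aeval ζ⁻¹ Q = 0 := by
      rw [hQ, aeval_def, eval₂_eq_eval_map, map_cyclotomic]
      exact (hζ.inv).isRoot_cyclotomic (by omega)
    rw [hwv, hwi, hroot, mul_zero] at h1
    exact h1
  have hdvd : Q ∣ Rf := by
    rw [hQ, cyclotomic_eq_minpoly_rat hζ (by omega)]
    exact minpoly.dvd ℚ ζ haeval
  exact eq_of_monic_of_dvd_of_natDegree_le (cyclotomic.monic m ℚ) hRfm hdvd (by omega)

lemma aux_trunc_reflect (m : ℕ) (hm : 1 < m) (i i' : ℕ)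
    (hii : i + i' + 1 = Nat.totient m) :
    cyclotomic m ℤ =
      X ^ (i' + 1) * ((cyclotomic m ℤ %ₘ X ^ (i + 1)).reflect i)
        + cyclotomic m ℤ %ₘ X ^ (i' + 1) := by
  set φt := Nat.totient m with hφt
  set Φ : ℤ[X] := cyclotomic m ℤ with hΦ
  have hsym : ∀ n, n ≤ φt → Φ.coeff (φt - n) = Φ.coeff n := by
    intro n hn
    conv_rhs => rw [hΦ, ← aux_cyclotomic_reflect m hm]
    rw [coeff_reflect, revAt_le hn]
  have hdeg : ∀ n, φt < n → Φ.coeff n = 0 := fun n hn =>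
    coeff_eq_zero_of_natDegree_lt (by rw [hΦ, natDegree_cyclotomic]; exact hn)
  ext n
  rw [coeff_add, mul_comm ((X : ℤ[X]) ^ (i' + 1)), coeff_mul_X_pow',
    aux_coeff_modByMonic_X_pow]
  by_cases h1 : n < i' + 1
  · rw [if_neg (by omega), if_pos h1, zero_add]
  · rw [if_pos (by omega : i' + 1 ≤ n), if_neg h1, add_zero, coeff_reflect]
    by_cases h2 : n ≤ φt
    · have hd : n - (i' + 1) ≤ i := by omega
      rw [revAt_le hd, aux_coeff_modByMonic_X_pow, if_pos (by omega)]
      rw [show i - (n - (i' + 1)) = φt - n from by omega, hsym n h2]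
    · have hd : i < n - (i' + 1) := by omega
      rw [revAt_eq_self_of_lt hd, aux_coeff_modByMonic_X_pow, if_neg (by omega),
        hdeg n (by omega)]

set_option maxHeartbeats 2000000 in
/-- Symmetry: if `i + i' = φ(m) - 1` then `h_{i'} = R_{φ(m)-1-r} (F h_i)`. -/
theorem hBlock_symmetry (m p : ℕ) (hm : 0 < m) (hodd : Odd m) (hsf : Squarefree m)
    (hp : p.Prime) (hpm : ¬ p ∣ m) (i i' : ℕ) (hi : i < Nat.totient m)
    (hi' : i' < Nat.totient m) (hsum : i + i' = Nat.totient m - 1) :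
    hBlock m p i' =
      rot m ((Nat.totient m : ℤ) - 1 - (p % m : ℕ)) (polyFlip m (hBlock m p i)) := by
  rcases eq_or_lt_of_le (show 1 ≤ m from hm) with h1 | hm2
  · -- the case m = 1
    have hm1 : m = 1 := h1.symm
    subst hm1
    have hi0 : i = 0 := by simpa [Nat.totient_one] using hi
    have hi0' : i' = 0 := by simpa [Nat.totient_one] using hi'
    subst hi0; subst hi0'
    have hc1 : cyclotomic 1 ℤ = X - C 1 := by rw [cyclotomic_one, map_one]
    have hX1 : (X : ℤ[X]) ^ 1 - 1 = X - C 1 := by rw [pow_one, map_one]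
    have hXC : (X : ℤ[X]) - 1 = X - C 1 := by rw [map_one]
    have hinv : invCyclotomic 1 = 1 := by
      have hmonic : ((X : ℤ[X]) - C 1).Monic := monic_X_sub_C 1
      have h0 : ((X : ℤ[X]) - C 1) %ₘ (X - C 1) = 0 :=
        (modByMonic_eq_zero_iff_dvd hmonic).2 dvd_rfl
      have hdm := modByMonic_add_div ((X : ℤ[X]) - C 1) (X - C 1)
      rw [h0, zero_add] at hdm
      have hne : ((X : ℤ[X]) - C 1) ≠ 0 := hmonic.ne_zero
      have hdm2 : (X - C 1 : ℤ[X]) * ((X - C 1) /ₘ (X - C 1)) = (X - C 1) * 1 := by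
        rw [mul_one, hdm]
      have hdm3 := mul_left_cancel₀ hne hdm2
      rw [invCyclotomic, hc1, hX1, hdm3]
    have hblk : hBlock 1 p 0 = 1 := by
      rw [hBlock, hinv, hc1]
      simp only [Nat.mod_one]
      norm_num
      rw [modByMonic_X]
      have he : (eval 1 (C (eval 0 ((X : ℤ[X]) - 1))) : ℤ) = -1 := by simp
      rw [he, show ((-1 : ℤ) : ℤ[X]) = -1 from by push_cast; ring, mul_neg_one,
        neg_modByMonic, hXC, modByMonic_X_sub_C_eq_C_eval]
      simp
    rw [hblk, rot, polyFlip]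
    have hrefl : (1 : ℤ[X]).reflect 0 = 1 := by
      ext n
      rw [coeff_reflect]
      rcases Nat.eq_zero_or_pos n with h | h
      · simp [h]
      · rw [revAt_eq_self_of_lt h]
    rw [hrefl, Nat.totient_one]
    norm_num
    rw [hXC, modByMonic_X_sub_C_eq_C_eval]
    simp
  -- main case : 1 < m
  have hφpos : 0 < Nat.totient m := Nat.totient_pos.2 hm
  set φt := Nat.totient m with hφt
  set r := p % m with hr
  have hrm : r < m := Nat.mod_lt _ hm
  set Φ : ℤ[X] := cyclotomic m ℤ with hΦ
  set Ψ : ℤ[X] := invCyclotomic m with hΨ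
  set D : ℤ[X] := X ^ m - 1 with hD
  have hDC : D = X ^ m - C 1 := by rw [hD, map_one]
  have hDmonic : D.Monic := by rw [hDC]; exact monic_X_pow_sub_C 1 (by omega)
  have hΦmonic : Φ.Monic := cyclotomic.monic m ℤ
  have hΦΨ : Φ * Ψ = D := by
    have hdvd : Φ ∣ D := cyclotomic.dvd_X_pow_sub_one m ℤ
    have h := modByMonic_add_div D Φ
    rwa [(modByMonic_eq_zero_iff_dvd hΦmonic).2 hdvd, zero_add] at h
  have hDne : D ≠ 0 := hDmonic.ne_zero
  have hΦne : Φ ≠ 0 := hΦmonic.ne_zero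
  have hΨne : Ψ ≠ 0 := fun h => hDne (by rw [← hΦΨ, h, mul_zero])
  have hφle : φt ≤ m := Nat.totient_le m
  have hdegΦ : Φ.natDegree = φt := natDegree_cyclotomic m ℤ
  have hdegD : D.natDegree = m := by rw [hDC]; exact natDegree_X_pow_sub_C
  have hdegΨ : Ψ.natDegree = m - φt := by
    have h := natDegree_mul hΦne hΨne
    rw [hΦΨ, hdegD, hdegΦ] at h
    omega
  have hD1 : D ≠ 1 := fun h => by
    have := hdegD
    rw [h, natDegree_one] at this
    omega
  -- quotient ring setup
  set I : Ideal ℤ[X] := Ideal.span {D} with hI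
  set π : ℤ[X] →+* (ℤ[X] ⧸ I) := Ideal.Quotient.mk I with hπ
  have hπD : π D = 0 := Ideal.Quotient.eq_zero_iff_mem.2 (Ideal.subset_span rfl)
  set x : ℤ[X] ⧸ I := π X with hx
  have hxm : x ^ m = 1 := by
    have h : x ^ m - 1 = π D := by rw [hD, map_sub, map_pow, map_one, hx]
    rw [hπD] at h
    exact sub_eq_zero.1 h
  have hm1 : m - 1 + 1 = m := by omega
  set u : (ℤ[X] ⧸ I)ˣ :=
    { val := x, inv := x ^ (m - 1),
      val_inv := by rw [← pow_succ', hm1, hxm],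
      inv_val := by rw [← pow_succ, hm1, hxm] } with hu
  have huv : (u : ℤ[X] ⧸ I) = x := rfl
  have humn : u ^ m = 1 := by
    ext
    rw [Units.val_pow_eq_pow_val, huv, hxm, Units.val_one]
  have hum : u ^ (m : ℤ) = 1 := by rw [zpow_natCast, humn]
  have hcong : ∀ a b : ℤ, a % (m : ℤ) = b % (m : ℤ) → u ^ a = u ^ b :=
    fun a b h => aux_zpow_congr u m hum h
  have hπaeval : ∀ f : ℤ[X], aeval x f = π f := by
    intro f
    induction f using Polynomial.induction_on' with
    | add pp qq hpp hqq => rw [map_add, map_add, hpp, hqq]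
    | monomial n a =>
        rw [aeval_monomial, ← C_mul_X_pow_eq_monomial, map_mul, map_pow, ← hx]
        congr 1
  have hmodπ : ∀ f : ℤ[X], π (f %ₘ D) = π f := by
    intro f
    conv_rhs => rw [← modByMonic_add_div f D]
    rw [map_add, map_mul, hπD, zero_mul, add_zero]
  have haevalD : ∀ (c : ℤ[X] ⧸ I), aeval c D = 0 →
      ∀ f : ℤ[X], aeval c (f %ₘ D) = aeval c f := by
    intro c hc f
    conv_rhs => rw [← modByMonic_add_div f D]
    rw [map_add, map_mul, hc, zero_mul, add_zero]
  set v : ℤ[X] ⧸ I := ((u⁻¹ : (ℤ[X] ⧸ I)ˣ) : ℤ[X] ⧸ I) with hv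
  have hvm : v ^ m = 1 := by
    rw [hv, ← Units.val_pow_eq_pow_val, inv_pow, humn, inv_one, Units.val_one]
  have hvD : aeval v D = 0 := by
    rw [hD, map_sub, map_pow, map_one, aeval_X, hvm, sub_self]
  set g : ℕ → ℤ[X] := fun j => Φ %ₘ X ^ (j + 1) with hg
  have hgdeg : ∀ j, (g j).natDegree ≤ j := by
    intro j
    have h3 : g j = Φ %ₘ X ^ (j + 1) := rfl
    rw [h3]
    have h1 : (X : ℤ[X]) ^ (j + 1) ≠ 1 := fun h => by
      have h2 := congrArg natDegree h
      rw [natDegree_X_pow, natDegree_one] at h2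
      omega
    have h2 := natDegree_modByMonic_lt Φ (monic_X_pow (j + 1)) h1
    rw [natDegree_X_pow] at h2
    omega
  have hXpow : ∀ (e : ℕ) (a : ℤ), ((e : ℤ) % m = a % m) →
      π (X ^ e) = ((u ^ a : (ℤ[X] ⧸ I)ˣ) : ℤ[X] ⧸ I) := by
    intro e a h
    have h1 : π (X ^ e) = ((u ^ (e : ℤ) : (ℤ[X] ⧸ I)ˣ) : ℤ[X] ⧸ I) := by
      rw [map_pow, ← hx, ← huv, zpow_natCast, Units.val_pow_eq_pow_val]
    rw [h1, hcong _ _ h]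
  have hvpow : ∀ (e : ℕ) (a : ℤ), ((e : ℤ) % m = a % m) →
      v ^ e = ((u ^ (-a) : (ℤ[X] ⧸ I)ˣ) : ℤ[X] ⧸ I) := by
    intro e a h
    have h1 : v ^ e = ((u ^ (-(e : ℤ)) : (ℤ[X] ⧸ I)ˣ) : ℤ[X] ⧸ I) := by
      rw [hv, ← Units.val_pow_eq_pow_val]
      congr 1
      rw [← zpow_natCast (u⁻¹) e, inv_zpow']
    rw [h1, hcong _ _ (Int.ModEq.neg h)]
  have harith : ∀ n : ℕ, ((m - n % m : ℕ) : ℤ) % m = (-(n : ℤ)) % m := by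
    intro n
    have h1 : n % m < m := Nat.mod_lt _ hm
    obtain ⟨q, hq⟩ : ∃ q, m * q + n % m = n := ⟨n / m, Nat.div_add_mod _ _⟩
    have hcast : ((m - n % m : ℕ) : ℤ) = (m : ℤ) - ((n % m : ℕ) : ℤ) := by omega
    rw [hcast]
    have hqz : (m : ℤ) * (q : ℤ) + ((n % m : ℕ) : ℤ) = (n : ℤ) := by exact_mod_cast hq
    have h2 : (m : ℤ) - ((n % m : ℕ) : ℤ) = -(n : ℤ) + (m : ℤ) * (q + 1) := by
      linear_combination -hqz
    rw [h2, Int.add_mul_emod_self_left]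
  have hxp : x ^ p = x ^ r := by
    conv_lhs => rw [show p = m * (p / m) + r from by rw [hr]; exact (Nat.div_add_mod p m).symm]
    rw [pow_add, pow_mul, hxm, one_pow, one_mul]
  have hQΦ : π Ψ * aeval (x ^ r) Φ = 0 := by
    have h1 : aeval (x ^ r) Φ = π (expand ℤ p Φ) := by
      rw [← hπaeval, expand_aeval, hxp]
    rw [h1, ← map_mul]
    have h2 : Ψ * expand ℤ p Φ = D * cyclotomic (m * p) ℤ := by
      rw [hΦ, cyclotomic_expand_eq_cyclotomic_mul hp hpm, ← hΦΨ, hΦ]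
      ring
    rw [h2, map_mul, hπD, zero_mul]
  have hΦrefl : Φ.reflect φt = Φ := aux_cyclotomic_reflect m hm2
  have hreflΨ : Ψ.reflect (m - φt) = -Ψ := by
    have h1 : (Φ * Ψ).reflect (φt + (m - φt)) = Φ.reflect φt * Ψ.reflect (m - φt) :=
      reflect_mul Φ Ψ (le_of_eq hdegΦ) (le_of_eq hdegΨ)
    rw [hΦΨ, show φt + (m - φt) = m from by omega, hΦrefl] at h1
    have h2 : D.reflect m = -D := by
      have e1 : ((X : ℤ[X]) ^ m).reflect m = 1 := by
        rw [reflect_monomial, revAt_le le_rfl, Nat.sub_self, pow_zero]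
      have e2 : (1 : ℤ[X]).reflect m = X ^ m := by
        conv_lhs => rw [← pow_zero (X : ℤ[X])]
        rw [reflect_monomial, revAt_le (Nat.zero_le m), Nat.sub_zero]
      rw [hD, sub_eq_add_neg, reflect_add, reflect_neg, e1, e2]
      ring
    rw [h2, ← hΦΨ] at h1
    have h3 : Φ * -Ψ = Φ * Ψ.reflect (m - φt) := by rw [← h1]; ring
    exact (mul_left_cancel₀ hΦne h3).symm
  have hGG : Φ = X ^ (i' + 1) * ((g i).reflect i) + g i' :=
    aux_trunc_reflect m hm2 i i' (by omega)
  have hbj : ∀ j, hBlock m p j =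
      -((X ^ (m - (j * r) % m) * (Ψ * expand ℤ r (g j))) %ₘ D) := fun j => rfl
  have hπh : ∀ j : ℕ, π (hBlock m p j) =
      -(((u ^ (-(j * r : ℕ) : ℤ) : (ℤ[X] ⧸ I)ˣ) : ℤ[X] ⧸ I) * (π Ψ * aeval (x ^ r) (g j))) := by
    intro j
    rw [hbj j, map_neg, hmodπ, map_mul, map_mul]
    rw [hXpow (m - (j * r) % m) (-(j * r : ℕ) : ℤ) (harith (j * r))]
    rw [show π (expand ℤ r (g j)) = aeval (x ^ r) (g j) from by rw [← hπaeval, expand_aeval]]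
  have hdeg_hB : ∀ j, (hBlock m p j).natDegree ≤ m - 1 := by
    intro j
    rw [hbj j, natDegree_neg]
    have h2 := natDegree_modByMonic_lt
      (X ^ (m - (j * r) % m) * (Ψ * expand ℤ r (g j))) hDmonic hD1
    rw [hdegD] at h2
    omega
  have hτΨ : aeval v Ψ = -(((u ^ (φt : ℤ) : (ℤ[X] ⧸ I)ˣ) : ℤ[X] ⧸ I) * π Ψ) := by
    have h1 := aux_reflect_aeval u (m - φt) Ψ (le_of_eq hdegΨ)
    rw [hreflΨ, map_neg, huv, hπaeval, ← hv] at h1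
    have h2 : x ^ (m - φt) = ((u ^ ((m - φt : ℕ) : ℤ) : (ℤ[X] ⧸ I)ˣ) : ℤ[X] ⧸ I) := by
      rw [← huv, ← Units.val_pow_eq_pow_val, zpow_natCast]
    rw [h2] at h1
    have h3 : aeval v Ψ = (((u ^ ((m - φt : ℕ) : ℤ))⁻¹ : (ℤ[X] ⧸ I)ˣ) : ℤ[X] ⧸ I) * -(π Ψ) :=
      (Units.eq_inv_mul_iff_mul_eq _).2 h1.symm
    rw [h3, ← zpow_neg]
    rw [hcong (-((m - φt : ℕ) : ℤ)) (φt : ℤ) (by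
      have h4 : -((m - φt : ℕ) : ℤ) = (φt : ℤ) + (m : ℤ) * (-1) := by omega
      rw [h4, Int.add_mul_emod_self_left])]
    ring
  -- the key identity transforming g i into g i'
  have hur : ((u ^ r : (ℤ[X] ⧸ I)ˣ) : ℤ[X] ⧸ I) = x ^ r := by
    rw [Units.val_pow_eq_pow_val, huv]
  have hkey : π Ψ * aeval (v ^ r) (g i) =
      -(((u ^ (-((r : ℤ) * (φt : ℤ))) : (ℤ[X] ⧸ I)ˣ) : ℤ[X] ⧸ I)
        * (π Ψ * aeval (x ^ r) (g i'))) := by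
    have h2 := congrArg (aeval (x ^ r) : ℤ[X] →ₐ[ℤ] (ℤ[X] ⧸ I)) hGG
    simp only [map_add, map_mul, map_pow, aeval_X] at h2
    have h3 := aux_reflect_aeval (u ^ r) i (g i) (hgdeg i)
    have hinvr : (((u ^ r)⁻¹ : (ℤ[X] ⧸ I)ˣ) : ℤ[X] ⧸ I) = v ^ r := by
      rw [← inv_pow, Units.val_pow_eq_pow_val, ← hv]
    rw [hur, hinvr] at h3
    have hxW : (x ^ r) ^ (i' + 1) * (x ^ r) ^ i =
        ((u ^ ((r : ℤ) * (φt : ℤ)) : (ℤ[X] ⧸ I)ˣ) : ℤ[X] ⧸ I) := by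
      have h7 : i' + 1 + i = φt := by omega
      have e1 : (x ^ r) ^ (i' + 1) * (x ^ r) ^ i = x ^ (r * φt) := by
        rw [← pow_add, h7, ← pow_mul]
      rw [e1, ← huv, ← Units.val_pow_eq_pow_val, ← zpow_natCast u (r * φt)]
      norm_cast
    have h5 : ((u ^ ((r : ℤ) * (φt : ℤ)) : (ℤ[X] ⧸ I)ˣ) : ℤ[X] ⧸ I)
        * (π Ψ * aeval (v ^ r) (g i)) + π Ψ * aeval (x ^ r) (g i') = 0 := by
      linear_combination (-(π Ψ)) * h2 + hQΦ + (-(π Ψ) * (x ^ r) ^ (i' + 1)) * h3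
        + (-(π Ψ * aeval (v ^ r) (g i))) * hxW
    have h6 : π Ψ * aeval (v ^ r) (g i) =
        (((u ^ ((r : ℤ) * (φt : ℤ)))⁻¹ : (ℤ[X] ⧸ I)ˣ) : ℤ[X] ⧸ I)
          * -(π Ψ * aeval (x ^ r) (g i')) :=
      (Units.eq_inv_mul_iff_mul_eq _).2 (by linear_combination h5)
    rw [h6, ← zpow_neg]
    ring
  -- compute π of the right-hand side
  set s : ℤ := (φt : ℤ) - 1 - (r : ℤ) with hs
  have hRdef : rot m s (polyFlip m (hBlock m p i)) =
      (X ^ (m - (s % (m : ℤ)).toNat) * ((hBlock m p i).reflect (m - 1))) %ₘ D := rfl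
  have hsT : ((m - (s % (m : ℤ)).toNat : ℕ) : ℤ) % m = (-s) % m := by
    have h0 : (0 : ℤ) < m := by exact_mod_cast hm
    have h1 : 0 ≤ s % m := Int.emod_nonneg s (by omega)
    have h2 : s % (m : ℤ) < m := Int.emod_lt_of_pos s h0
    obtain ⟨q, hq⟩ : ∃ q : ℤ, (m : ℤ) * q + s % m = s := ⟨s / m, Int.mul_ediv_add_emod s m⟩
    have h4 : ((m - (s % (m : ℤ)).toNat : ℕ) : ℤ) = (m : ℤ) - s % m := by omega
    rw [h4]
    have h5 : (m : ℤ) - s % m = -s + (m : ℤ) * (q + 1) := by linear_combination -hq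
    rw [h5, Int.add_mul_emod_self_left]
  have hπR : π (rot m s (polyFlip m (hBlock m p i))) =
      -(((u ^ (-(i' * r : ℕ) : ℤ) : (ℤ[X] ⧸ I)ˣ) : ℤ[X] ⧸ I)
        * (π Ψ * aeval (x ^ r) (g i'))) := by
    rw [hRdef, hmodπ, map_mul, hXpow _ (-s) hsT]
    have hru := aux_reflect_aeval u (m - 1) (hBlock m p i) (hdeg_hB i)
    rw [huv, hπaeval, ← hv] at hru
    rw [hru]
    have hτh : aeval v (hBlock m p i) =
        -(((u ^ ((i * r : ℕ) : ℤ) : (ℤ[X] ⧸ I)ˣ) : ℤ[X] ⧸ I)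
          * (aeval v Ψ * aeval (v ^ r) (g i))) := by
      rw [hbj i, map_neg, haevalD v hvD, map_mul, map_mul, map_pow, aeval_X]
      rw [hvpow (m - (i * r) % m) (-(i * r : ℕ) : ℤ) (harith (i * r)), neg_neg]
      rw [show aeval v (expand ℤ r (g i)) = aeval (v ^ r) (g i) from expand_aeval r (g i) v]
    rw [hτh, hτΨ]
    have hUnits : ((u ^ (-s) : (ℤ[X] ⧸ I)ˣ) : ℤ[X] ⧸ I) * (u : ℤ[X] ⧸ I) ^ (m - 1)
        * ((u ^ ((i * r : ℕ) : ℤ) : (ℤ[X] ⧸ I)ˣ) : ℤ[X] ⧸ I)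
        * ((u ^ (φt : ℤ) : (ℤ[X] ⧸ I)ˣ) : ℤ[X] ⧸ I)
        * ((u ^ (-((r : ℤ) * (φt : ℤ))) : (ℤ[X] ⧸ I)ˣ) : ℤ[X] ⧸ I)
        = ((u ^ (-(i' * r : ℕ) : ℤ) : (ℤ[X] ⧸ I)ˣ) : ℤ[X] ⧸ I) := by
      have hm1c : ((u : ℤ[X] ⧸ I)) ^ (m - 1)
          = ((u ^ (((m - 1 : ℕ) : ℤ)) : (ℤ[X] ⧸ I)ˣ) : ℤ[X] ⧸ I) := by
        rw [zpow_natCast, Units.val_pow_eq_pow_val]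
      rw [hm1c, ← Units.val_mul, ← Units.val_mul, ← Units.val_mul, ← Units.val_mul,
        ← zpow_add, ← zpow_add, ← zpow_add, ← zpow_add]
      congr 1
      apply hcong
      have hφZ : (φt : ℤ) = (i : ℤ) + (i' : ℤ) + 1 := by omega
      have hexp : -s + ((m - 1 : ℕ) : ℤ) + ((i * r : ℕ) : ℤ) + (φt : ℤ)
          + -((r : ℤ) * (φt : ℤ)) = (-(i' * r : ℕ) : ℤ) + (m : ℤ) * 1 := by
        rw [hs]
        have hm1Z : ((m - 1 : ℕ) : ℤ) = (m : ℤ) - 1 := by omega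
        rw [hm1Z]
        push_cast
        linear_combination (-(r : ℤ)) * hφZ
      rw [hexp, Int.add_mul_emod_self_left]
    linear_combination (((u ^ (-s) : (ℤ[X] ⧸ I)ˣ) : ℤ[X] ⧸ I) * (u : ℤ[X] ⧸ I) ^ (m - 1)
        * ((u ^ ((i * r : ℕ) : ℤ) : (ℤ[X] ⧸ I)ˣ) : ℤ[X] ⧸ I)
        * ((u ^ (φt : ℤ) : (ℤ[X] ⧸ I)ˣ) : ℤ[X] ⧸ I)) * hkey
      + (-(π Ψ * aeval (x ^ r) (g i'))) * hUnits
  -- conclude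
  have hπeq : π (hBlock m p i') = π (rot m s (polyFlip m (hBlock m p i))) := by
    rw [hπh i', hπR]
  have hdegL : (hBlock m p i').degree < D.degree := by
    rw [hbj i', degree_neg]
    exact degree_modByMonic_lt _ hDmonic
  have hdegR : (rot m s (polyFlip m (hBlock m p i))).degree < D.degree := by
    rw [hRdef]
    exact degree_modByMonic_lt _ hDmonic
  have hzero : π (hBlock m p i' - rot m s (polyFlip m (hBlock m p i))) = 0 := by
    rw [map_sub, hπeq, sub_self]
  have hdvd : D ∣ hBlock m p i' - rot m s (polyFlip m (hBlock m p i)) := by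
    have h8 := Ideal.Quotient.eq_zero_iff_mem.1 hzero
    rw [hI, Ideal.mem_span_singleton] at h8
    exact h8
  have hfin : hBlock m p i' - rot m s (polyFlip m (hBlock m p i)) = 0 :=
    eq_zero_of_dvd_of_degree_lt hdvd
      (lt_of_le_of_lt (degree_sub_le _ _) (max_lt hdegL hdegR))
  exact sub_eq_zero.1 hfin
end

section
/- Let m be a positive integer, u, v integers, f a polynomial of degree < m, and g = Σ_t c_t x^t a polynomial of degree < m. Then Σ_t c_t · R_{u - tv} f = R_u( f · g(x^{rem(v,m)}) mod (x^m - 1) ), where R_s f := rem(x^{m - rem(s,m)} f, x^m - 1). -/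
open Polynomial

private lemma finset_sum_modByMonic {α : Type*} (s : Finset α) (P : α → ℤ[X]) (q : ℤ[X]) :
    (∑ t ∈ s, P t) %ₘ q = ∑ t ∈ s, P t %ₘ q := by
  classical
  induction s using Finset.induction_on with
  | empty => simp
  | insert _ _ h ih => rw [Finset.sum_insert h, Finset.sum_insert h, Polynomial.add_modByMonic, ih]

private lemma mod_congr {q a b : ℤ[X]} (hq : q.Monic) (h : q ∣ a - b) : a %ₘ q = b %ₘ q := by
  rw [← sub_eq_zero, ← Polynomial.sub_modByMonic]
  exact (Polynomial.modByMonic_eq_zero_iff_dvd hq).2 h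

private lemma dvd_Xpow_sub_Xpow (m a b : ℕ) (h : a % m = b % m) :
    ((X : ℤ[X]) ^ m - 1) ∣ X ^ a - X ^ b := by
  wlog hab : a ≤ b generalizing a b
  · exact (dvd_neg).mp (by simpa [neg_sub] using this b a h.symm (le_of_not_ge hab))
  obtain ⟨k, hk⟩ : m ∣ b - a := (Nat.modEq_iff_dvd' hab).mp h
  have hb : (X : ℤ[X]) ^ b = X ^ a * (X ^ m) ^ k := by
    rw [← pow_mul, ← pow_add, ← hk, Nat.add_sub_cancel' hab]
  have hd : ((X : ℤ[X]) ^ m - 1) ∣ (X ^ m) ^ k - 1 := by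
    simpa using sub_dvd_pow_sub_pow ((X : ℤ[X]) ^ m) 1 k
  rw [hb, show (X : ℤ[X]) ^ a - X ^ a * (X ^ m) ^ k = -(X ^ a * ((X ^ m) ^ k - 1)) by ring]
  exact dvd_neg.mpr (hd.mul_left _)

/-- `Σ_t c_t · R_{u - tv} f = R_u (f · g(x^{rem(v,m)}) mod (x^m - 1))`, where
`g = Σ_t c_t x^t` has degree `< m`. -/
theorem sum_rot_eq_rot_mul_expand (m : ℕ) (hm : 0 < m) (u v : ℤ) (f g : ℤ[X])
    (hf : f.degree < m) (hg : g.degree < m) :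
    ∑ t ∈ Finset.range m, C (g.coeff t) * rot m (u - t * v) f =
      rot m u ((f * Polynomial.expand ℤ ((v % (m : ℤ)).toNat) g) %ₘ (X ^ m - 1)) := by
  set q : ℤ[X] := X ^ m - 1 with hqdef
  have hq : q.Monic := by
    simpa using Polynomial.monic_X_pow_sub_C (1 : ℤ) hm.ne'
  set w : ℕ := (v % (m : ℤ)).toNat with hw
  set b : ℕ := m - (u % (m : ℤ)).toNat with hb
  set e : ℕ → ℕ := fun t => m - ((u - t * v) % (m : ℤ)).toNat with he
  -- rewrite LHS as a single modByMonic
  have hL : ∑ t ∈ Finset.range m, C (g.coeff t) * rot m (u - t * v) f =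
      (∑ t ∈ Finset.range m, C (g.coeff t) * (X ^ e t * f)) %ₘ q := by
    rw [finset_sum_modByMonic]
    refine Finset.sum_congr rfl fun t _ => ?_
    rw [← smul_eq_C_mul, ← smul_eq_C_mul, Polynomial.smul_modByMonic]
    rfl
  -- rewrite RHS
  set h : ℤ[X] := f * Polynomial.expand ℤ w g with hhdef
  clear_value h
  have hR : rot m u (h %ₘ q) = (X ^ b * h) %ₘ q := by
    show (X ^ b * (h %ₘ q)) %ₘ q = (X ^ b * h) %ₘ q
    refine mod_congr hq ?_
    have hd : q ∣ h %ₘ q - h :=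
      ⟨-(h /ₘ q), by linear_combination Polynomial.modByMonic_add_div h q⟩
    rw [← mul_sub]
    exact hd.mul_left _
  rw [hL, hR]
  refine mod_congr hq ?_
  -- expand g as a sum of monomials
  have hgnd : g.natDegree < m := by
    rcases eq_or_ne g 0 with rfl | hg0
    · simpa using hm
    · exact (Polynomial.natDegree_lt_iff_degree_lt hg0).2 (by simpa using hg)
  have hgsum : Polynomial.expand ℤ w g = ∑ t ∈ Finset.range m, C (g.coeff t) * X ^ (t * w) := by
    conv_lhs => rw [g.as_sum_range' m hgnd]
    rw [map_sum]
    refine Finset.sum_congr rfl fun t _ => ?_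
    rw [Polynomial.expand_monomial, ← Polynomial.C_mul_X_pow_eq_monomial]
  have hsplit : ∑ t ∈ Finset.range m, C (g.coeff t) * (X ^ e t * f) - X ^ b * h =
      ∑ t ∈ Finset.range m, C (g.coeff t) * f * (X ^ (e t) - X ^ (b + t * w)) := by
    rw [hhdef, hgsum, Finset.mul_sum, Finset.mul_sum, ← Finset.sum_sub_distrib]
    refine Finset.sum_congr rfl fun t _ => ?_
    rw [pow_add]; ring
  rw [hsplit]
  refine Finset.dvd_sum fun t _ => ?_
  refine Dvd.dvd.mul_left ?_ _
  refine dvd_Xpow_sub_Xpow m _ _ ?_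
  -- exponent arithmetic
  show (m - ((u - t * v) % (m : ℤ)).toNat) % m = (m - (u % (m : ℤ)).toNat + t * w) % m
  have hmz : (m : ℤ) ≠ 0 := by exact_mod_cast hm.ne'
  have hwc : ((w : ℕ) : ℤ) = v % m := Int.toNat_of_nonneg (Int.emod_nonneg _ hmz)
  have hA : (((u - t * v) % (m : ℤ)).toNat : ℤ) = (u - t * v) % m :=
    Int.toNat_of_nonneg (Int.emod_nonneg _ hmz)
  have hU : (((u % (m : ℤ)).toNat : ℤ)) = u % m :=
    Int.toNat_of_nonneg (Int.emod_nonneg _ hmz)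
  have hWv : ((t * w : ℕ) : ℤ) % m = ((t : ℤ) * v) % m := by
    rw [Nat.cast_mul, hwc]
    exact Int.ModEq.mul_left (t : ℤ) (Int.emod_emod_of_dvd v dvd_rfl)
  have key : ∀ (A U W : ℕ) (tv : ℤ), (A : ℤ) = (u - tv) % m → (U : ℤ) = u % m →
      ((W : ℕ) : ℤ) % m = tv % m → (m - A) % m = (m - U + W) % m := by
    intro A U W tv h1 h2 h3
    have hmpos : (0 : ℤ) < m := by exact_mod_cast hm
    have hzero : (m : ℤ) ≡ 0 [ZMOD (m : ℤ)] := Int.modEq_zero_iff_dvd.mpr dvd_rfl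
    have hA2 : (A : ℤ) ≡ u - tv [ZMOD (m : ℤ)] := by
      rw [h1]; exact Int.emod_emod_of_dvd _ dvd_rfl
    have hU2 : (U : ℤ) ≡ u [ZMOD (m : ℤ)] := by
      rw [h2]; exact Int.emod_emod_of_dvd _ dvd_rfl
    have hW2 : (W : ℤ) ≡ tv [ZMOD (m : ℤ)] := h3
    have e1 : ((m : ℤ) - A) ≡ 0 - (u - tv) [ZMOD (m : ℤ)] := hzero.sub hA2
    have e2 : ((m : ℤ) - U + W) ≡ 0 - u + tv [ZMOD (m : ℤ)] := (hzero.sub hU2).add hW2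
    have hre : (0 : ℤ) - (u - tv) = 0 - u + tv := by ring
    have final : ((m : ℤ) - A) ≡ ((m : ℤ) - U + W) [ZMOD (m : ℤ)] :=
      e1.trans (by rw [← hre] at e2; exact e2.symm)
    have hAm : A ≤ m := by
      have h4 : (u - tv) % (m : ℤ) < m := Int.emod_lt_of_pos _ hmpos
      omega
    have hUm : U ≤ m := by
      have h4 : u % (m : ℤ) < m := Int.emod_lt_of_pos _ hmpos
      omega
    zify [hAm, hUm]
    exact final
  exact key _ _ (t * w) ((t : ℤ) * v) hA hU hWv
end

section
/- Let m be an odd squarefree integer and p a prime with p ∤ m, r = p mod m. Then for every 0 ≤ i ≤ φ(m)-1, writing Φ_m = Σ_s a_s x^s, we have the identity mod x^m - 1: Σ_{s=0}^{i} a_s x^{((i-s)r) mod m} Ψ_m(x) ≡ -Σ_{s=i+1}^{φ(m)} a_s x^{((i-s)r) mod m} Ψ_m(x) (mod x^m - 1). -/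
open Polynomial

private lemma X_pow_sub_X_pow_dvd (m a b : ℕ) (h : (m : ℤ) ∣ (a : ℤ) - b) :
    (X ^ m - 1 : ℤ[X]) ∣ X ^ a - X ^ b := by
  wlog hab : b ≤ a generalizing a b
  · have h2 := this b a (dvd_sub_comm.mp h) (by omega)
    have : (X ^ a - X ^ b : ℤ[X]) = -(X ^ b - X ^ a) := by ring
    rw [this]
    exact dvd_neg.2 h2
  · obtain ⟨k, hk⟩ : m ∣ a - b := by
      have h2 : (m : ℤ) ∣ ((a - b : ℕ) : ℤ) := by rwa [Nat.cast_sub hab]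
      exact_mod_cast h2
    have h1 : (X ^ m - 1 : ℤ[X]) ∣ (X ^ m) ^ k - 1 := by
      simpa using sub_dvd_pow_sub_pow (X ^ m : ℤ[X]) 1 k
    have hab2 : a = b + m * k := by omega
    have h3 : (X ^ a - X ^ b : ℤ[X]) = X ^ b * ((X ^ m) ^ k - 1) := by
      rw [← pow_mul, mul_sub, ← pow_add, mul_one, hab2]
    rw [h3]
    exact Dvd.dvd.mul_left h1 _

private lemma cyclotomic_dvd_comp (m r' : ℕ) (hm : 0 < m) (h : Nat.Coprime r' m) :
    cyclotomic m ℤ ∣ (cyclotomic m ℤ).comp (X ^ r') := by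
  have key : cyclotomic m ℚ ∣ (cyclotomic m ℚ).comp (X ^ r') := by
    haveI : NeZero ((m : ℕ) : ℂ) := ⟨by exact_mod_cast hm.ne'⟩
    have hprim := Complex.isPrimitiveRoot_exp m hm.ne'
    rw [cyclotomic_eq_minpoly_rat hprim hm]
    refine minpoly.dvd ℚ _ ?_
    rw [aeval_comp]
    have hx : (aeval (Complex.exp (2 * Real.pi * Complex.I / m)) (X ^ r' : ℚ[X])) =
        Complex.exp (2 * Real.pi * Complex.I / m) ^ r' := by simp
    rw [hx, ← cyclotomic_eq_minpoly_rat hprim hm, aeval_def, ← eval_map, map_cyclotomic,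
      ← IsRoot.def, isRoot_cyclotomic_iff]
    exact hprim.pow_of_coprime r' h
  rw [← map_dvd_map (Int.castRingHom ℚ) Int.cast_injective (cyclotomic.monic m ℤ),
    map_cyclotomic, Polynomial.map_comp, Polynomial.map_pow, map_X, map_cyclotomic]
  exact key

/-- `Σ_{s=0}^{i} a_s x^{((i-s)r) mod m} Ψ_m ≡ -Σ_{s=i+1}^{φ(m)} a_s x^{((i-s)r) mod m} Ψ_m
(mod x^m - 1)`, where `a_s` are the coefficients of `Φ_m`, `r = p mod m`, and the
exponents `(i-s)r` are reduced mod `m` into `[0,m)`. -/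
theorem sum_low_congr_neg_sum_high (m p : ℕ) (hm : 0 < m) (hodd : Odd m)
    (hsf : Squarefree m) (hp : p.Prime) (hpm : ¬ p ∣ m) (i : ℕ) (hi : i < Nat.totient m) :
    (X ^ m - 1 : ℤ[X]) ∣
      ((∑ s ∈ Finset.range (i + 1),
          C ((cyclotomic m ℤ).coeff s) *
            X ^ ((((i : ℤ) - s) * (p % m : ℕ)) % (m : ℤ)).toNat * invCyclotomic m) +
        ∑ s ∈ Finset.Icc (i + 1) (Nat.totient m),
          C ((cyclotomic m ℤ).coeff s) *
            X ^ ((((i : ℤ) - s) * (p % m : ℕ)) % (m : ℤ)).toNat * invCyclotomic m) := by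
  set φ := Nat.totient m with hφ
  set f : ℕ → ℤ[X] := fun s => C ((cyclotomic m ℤ).coeff s) *
      X ^ ((((i : ℤ) - s) * (p % m : ℕ)) % (m : ℤ)).toNat * invCyclotomic m with hf
  have hsplit : ((∑ s ∈ Finset.range (i + 1), f s) + ∑ s ∈ Finset.Icc (i + 1) φ, f s)
      = ∑ s ∈ Finset.range (φ + 1), f s := by
    have hIcc : Finset.Icc (i + 1) φ = Finset.Ico (i + 1) (φ + 1) := by
      rw [Finset.Ico_add_one_right_eq_Icc]
    rw [Finset.range_eq_Ico, Finset.range_eq_Ico, hIcc]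
    exact Finset.sum_Ico_consecutive f (m := 0) (n := i + 1) (k := φ + 1) (by omega) (by omega)
  rw [hsplit]
  -- basic coprimality facts
  have hpm' : Nat.Coprime p m := (Nat.Prime.coprime_iff_not_dvd hp).mpr hpm
  have hrm : Nat.Coprime (p % m) m := by
    rw [Nat.Coprime, ← Nat.gcd_rec]
    exact Nat.coprime_comm.mp hpm'
  set r' : ℕ := ((m - 1) * (p % m)) % m with hr'def
  have hr'm : Nat.Coprime r' m := by
    have h2 : Nat.Coprime (m - 1) m :=
      (Nat.coprime_self_sub_left (by omega : 1 ≤ m)).mpr (Nat.coprime_one_left m)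
    have h3 : Nat.Coprime ((m - 1) * (p % m)) m := Nat.Coprime.mul h2 hrm
    rw [hr'def, Nat.Coprime, ← Nat.gcd_rec]
    exact Nat.coprime_comm.mp h3
  -- X^m - 1 = Φ * Ψ
  have hXm : (X ^ m - 1 : ℤ[X]) = cyclotomic m ℤ * invCyclotomic m := by
    obtain ⟨q, hq⟩ := cyclotomic.dvd_X_pow_sub_one m ℤ
    rw [invCyclotomic, hq, mul_divByMonic_cancel_left _ (cyclotomic.monic m ℤ)]
  -- per-term congruence of exponents
  have key : ∀ s ∈ Finset.range (φ + 1), (X ^ m - 1 : ℤ[X]) ∣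
      (X ^ ((((i : ℤ) - s) * (p % m : ℕ)) % (m : ℤ)).toNat - X ^ (i * (p % m) + s * r')) := by
    intro s _
    apply X_pow_sub_X_pow_dvd
    have hmne : (m : ℤ) ≠ 0 := by exact_mod_cast hm.ne'
    have he : (((((i : ℤ) - s) * (p % m : ℕ)) % (m : ℤ)).toNat : ℤ)
        = (((i : ℤ) - s) * (p % m : ℕ)) % (m : ℤ) :=
      Int.toNat_of_nonneg (Int.emod_nonneg _ hmne)
    rw [he]
    have h1 : (((i : ℤ) - s) * (p % m : ℕ)) % (m : ℤ) ≡ ((i : ℤ) - s) * (p % m : ℕ) [ZMOD m] :=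
      Int.emod_emod_of_dvd _ dvd_rfl
    have hr' : ((r' : ℕ) : ℤ) ≡ -((p % m : ℕ) : ℤ) [ZMOD m] := by
      have hcast : ((r' : ℕ) : ℤ) = (((m : ℤ) - 1) * ((p % m : ℕ) : ℤ)) % (m : ℤ) := by
        rw [hr'def]
        push_cast [Nat.cast_sub (by omega : 1 ≤ m)]
        ring_nf
      rw [hcast]
      calc ((m : ℤ) - 1) * ((p % m : ℕ) : ℤ) % (m : ℤ)
          ≡ ((m : ℤ) - 1) * ((p % m : ℕ) : ℤ) [ZMOD m] := Int.emod_emod_of_dvd _ dvd_rfl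
        _ ≡ -((p % m : ℕ) : ℤ) [ZMOD m] := by
            apply Int.ModEq.symm
            rw [Int.modEq_iff_dvd]
            exact ⟨(p % m : ℕ), by push_cast; ring⟩
    have h2 : ((i : ℤ) - s) * ((p % m : ℕ) : ℤ)
        ≡ ((i * (p % m) + s * r' : ℕ) : ℤ) [ZMOD m] := by
      have hs : ((s : ℕ) : ℤ) * ((r' : ℕ) : ℤ) ≡ (s : ℤ) * (-((p % m : ℕ) : ℤ)) [ZMOD m] :=
        (Int.ModEq.refl (s : ℤ)).mul hr'
      calc ((i : ℤ) - s) * ((p % m : ℕ) : ℤ)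
          = (i : ℤ) * ((p % m : ℕ) : ℤ) + (s : ℤ) * (-((p % m : ℕ) : ℤ)) := by ring
        _ ≡ (i : ℤ) * ((p % m : ℕ) : ℤ) + (s : ℤ) * ((r' : ℕ) : ℤ) [ZMOD m] :=
            (Int.ModEq.refl _).add hs.symm
        _ = ((i * (p % m) + s * r' : ℕ) : ℤ) := by push_cast; ring
    exact ((h1.trans h2).symm).dvd
  -- replace each exponent
  have hsum : (X ^ m - 1 : ℤ[X]) ∣ (∑ s ∈ Finset.range (φ + 1), f s) -
      ∑ s ∈ Finset.range (φ + 1),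
        C ((cyclotomic m ℤ).coeff s) * X ^ (i * (p % m) + s * r') * invCyclotomic m := by
    rw [← Finset.sum_sub_distrib]
    refine Finset.dvd_sum fun s hs => ?_
    have h4 := key s hs
    have heq : f s - C ((cyclotomic m ℤ).coeff s) * X ^ (i * (p % m) + s * r') * invCyclotomic m
        = (C ((cyclotomic m ℤ).coeff s) * invCyclotomic m) *
          (X ^ ((((i : ℤ) - s) * (p % m : ℕ)) % (m : ℤ)).toNat - X ^ (i * (p % m) + s * r')) := by
      rw [hf]; ring
    rw [heq]
    exact h4.mul_left _
  -- the substituted sum is divisible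
  have hG : (X ^ m - 1 : ℤ[X]) ∣ ∑ s ∈ Finset.range (φ + 1),
      C ((cyclotomic m ℤ).coeff s) * X ^ (i * (p % m) + s * r') * invCyclotomic m := by
    have hΦsum : (cyclotomic m ℤ).comp (X ^ r')
        = ∑ s ∈ Finset.range (φ + 1), C ((cyclotomic m ℤ).coeff s) * X ^ (s * r') := by
      conv_lhs => rw [(cyclotomic m ℤ).as_sum_range' (φ + 1)
        (by rw [natDegree_cyclotomic]; omega)]
      rw [Polynomial.comp, Polynomial.eval₂_finset_sum]
      refine Finset.sum_congr rfl fun s _ => ?_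
      rw [eval₂_monomial, ← pow_mul, mul_comm r' s]
    obtain ⟨q, hq⟩ := cyclotomic_dvd_comp m r' hm hr'm
    have hGsum : ∑ s ∈ Finset.range (φ + 1),
        C ((cyclotomic m ℤ).coeff s) * X ^ (i * (p % m) + s * r') * invCyclotomic m
        = X ^ (i * (p % m)) * ((cyclotomic m ℤ).comp (X ^ r')) * invCyclotomic m := by
      rw [hΦsum]
      conv_rhs => rw [Finset.mul_sum, Finset.sum_mul]
      refine Finset.sum_congr rfl fun s _ => ?_
      rw [pow_add]; ring
    rw [hGsum, hq, hXm]
    exact ⟨X ^ (i * (p % m)) * q, by ring⟩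
  have hT : (∑ s ∈ Finset.range (φ + 1), f s)
      = ((∑ s ∈ Finset.range (φ + 1), f s) -
        ∑ s ∈ Finset.range (φ + 1),
          C ((cyclotomic m ℤ).coeff s) * X ^ (i * (p % m) + s * r') * invCyclotomic m) +
        ∑ s ∈ Finset.range (φ + 1),
          C ((cyclotomic m ℤ).coeff s) * X ^ (i * (p % m) + s * r') * invCyclotomic m := by
    ring
  rw [hT]
  exact dvd_add hsum hG
end

section
/- Let m be an odd squarefree positive integer and p a prime not dividing m, p = qm + r with 0 < r < m. Then every coefficient of Φ_{mp} of the form [x^{ip + jm + k}]Φ_{mp} with 0 ≤ i ≤ φ(m)-1, 0 ≤ j ≤ q-1, 0 ≤ k < m, is independent of j; that is, [x^{ip + jm + k}]Φ_{mp} = [x^{ip + k}]Φ_{mp} for all such i, j, k. -/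
open Polynomial

/-- Repetition at the coefficient level: the coefficient of `x^{ip+jm+k}` in `Φ_{mp}` is
independent of `j` for `0 ≤ i ≤ φ(m)-1`, `0 ≤ j ≤ q-1`, `0 ≤ k < m`. -/
theorem cyclotomic_coeff_repetition (m p : ℕ) (hm : 0 < m) (hodd : Odd m)
    (hsf : Squarefree m) (hp : p.Prime) (hpm : ¬ p ∣ m) :
    ∀ i < Nat.totient m, ∀ j < p / m, ∀ k < m,
      (cyclotomic (m * p) ℤ).coeff (i * p + j * m + k) =
        (cyclotomic (m * p) ℤ).coeff (i * p + k) := by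
  set f : ℤ[X] := cyclotomic (m * p) ℤ with hf
  obtain ⟨g, hg⟩ : cyclotomic m ℤ ∣ X ^ m - 1 := cyclotomic.dvd_X_pow_sub_one m ℤ
  have hXm : (X ^ m - 1 : ℤ[X]) ≠ 0 := by
    simpa using X_pow_sub_C_ne_zero hm (1 : ℤ)
  have hgne : g ≠ 0 := by rintro rfl; simp at hg; exact hXm hg
  have hdegXm : (X ^ m - 1 : ℤ[X]).natDegree = m := by
    simpa using natDegree_X_pow_sub_C (n := m) (r := (1 : ℤ))
  have hdegg : g.natDegree < m := by
    have h1 : (X ^ m - 1 : ℤ[X]).natDegree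
        = (cyclotomic m ℤ).natDegree + g.natDegree := by
      rw [hg, natDegree_mul (cyclotomic_ne_zero m ℤ) hgne]
    rw [hdegXm, natDegree_cyclotomic] at h1
    have := Nat.totient_pos.mpr hm
    omega
  -- key identity
  have hkey : f * (X ^ m - 1) = expand ℤ p (cyclotomic m ℤ) * g := by
    rw [hg, cyclotomic_expand_eq_cyclotomic_mul hp hpm, hf]
    ring
  -- RHS coefficient vanishing
  have hzero : ∀ n : ℕ, m ≤ n % p →
      (expand ℤ p (cyclotomic m ℤ) * g).coeff n = 0 := by
    intro n hn
    rw [coeff_mul]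
    apply Finset.sum_eq_zero
    rintro ⟨a, b⟩ hab
    rw [Finset.HasAntidiagonal.mem_antidiagonal] at hab
    rw [coeff_expand hp.pos]
    by_cases hpa : p ∣ a
    · rw [if_pos hpa]
      have hb : g.coeff b = 0 := by
        apply coeff_eq_zero_of_natDegree_lt
        by_contra hbm
        push_neg at hbm
        have hbm' : b < m := lt_of_le_of_lt hbm hdegg
        -- a is a multiple of p with n - m < a ≤ n, contradiction with m ≤ n % p
        obtain ⟨c, rfl⟩ := hpa
        have hdiv := Nat.div_add_mod n p
        have hmodlt : n % p < p := Nat.mod_lt n hp.pos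
        have h1 : n / p + 1 ≤ c := by
          apply Nat.lt_of_mul_lt_mul_left (a := p)
          omega
        have h2 : p * (n / p + 1) ≤ p * c := Nat.mul_le_mul le_rfl h1
        rw [Nat.mul_succ] at h2
        omega
      rw [hb, mul_zero]
    · rw [if_neg hpa, zero_mul]
  -- step lemma
  have hstep : ∀ n : ℕ, m ≤ n % p → f.coeff n = f.coeff (n - m) := by
    intro n hn
    have hmn : m ≤ n := le_trans hn (Nat.mod_le n p)
    have h1 : (f * (X ^ m - 1)).coeff n = 0 := by rw [hkey]; exact hzero n hn
    rw [mul_sub, mul_one, coeff_sub, coeff_mul_X_pow', if_pos hmn,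
      sub_eq_zero] at h1
    exact h1.symm
  -- main induction
  intro i hi j hj k hk
  have hqm : (p / m) * m ≤ p := Nat.div_mul_le_self p m
  induction j with
  | zero => simp
  | succ j ih =>
    have hj' : j < p / m := Nat.lt_of_succ_lt hj
    have hlt : (j + 1) * m + k < p := by
      have h5 : (j + 2) * m ≤ (p / m) * m := Nat.mul_le_mul (by omega) le_rfl
      have h6 : (j + 2) * m = (j + 1) * m + m := by ring
      omega
    have hmod : (i * p + (j + 1) * m + k) % p = (j + 1) * m + k := by
      rw [add_assoc, mul_comm i p, Nat.mul_add_mod, Nat.mod_eq_of_lt hlt]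
    have hm' : m ≤ (i * p + (j + 1) * m + k) % p := by
      rw [hmod]; nlinarith
    have heq : i * p + (j + 1) * m + k - m = i * p + j * m + k := by
      have : i * p + (j + 1) * m + k = (i * p + j * m + k) + m := by ring
      omega
    rw [hstep _ hm', heq, ih hj']
end
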